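/- arXiv:2103.11550 — 4 statements merged into one kernel-verified Lean document; each statement's English description precedes it below -/
import Mathlib

section
/- Let G be a simple graph on n vertices with at least one edge, let S be a proper subset of V(G), and let X and Y be disjoint nonempty vertex subsets with X ∪ Y = V(G) − S, |X| ≤ |Y|, and no edge of G joining a vertex of X to a vertex of Y. Then 2·μₙ(G)·|X| ≤ (μₙ(G) − μ₂(G))·n. -/
namespace Paper

variable {V : Type*}

/-- The eigenvalues of the Laplacian matrix of `G`, listed in nondecreasing order
(with multiplicity), indexed by `Fin (Fintype.card V)`. -/
noncomputable def lapEig [Fintype V] (G : SimpleGraph V) : Fin (Fintype.card V) → ℝ :=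
  letI := Classical.decEq V
  letI : DecidableRel G.Adj := Classical.decRel _
  let f : Fin (Fintype.card V) → ℝ :=
    (SimpleGraph.posSemidef_lapMatrix ℝ G).isHermitian.eigenvalues ∘ (Fintype.equivFin V).symm
  f ∘ Tuple.sort f

/-- `mu G i` is the `i`-th smallest Laplacian eigenvalue of `G` (1-indexed),
so `mu G 2 = μ₂` and `mu G n = μₙ` when `G` has `n` vertices. -/
noncomputable def mu [Fintype V] (G : SimpleGraph V) (i : ℕ) : ℝ :=
  if h : i - 1 < Fintype.card V then lapEig G ⟨i - 1, h⟩ else 0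

/-- The matching number of `G`: the maximum size of a matching. -/
noncomputable def matchingNumber [Fintype V] (G : SimpleGraph V) : ℕ :=
  sSup {k | ∃ M : G.Subgraph, M.IsMatching ∧ M.edgeSet.ncard = k}

/-- Number of odd components (components with an odd number of vertices) of `G - S`. -/
noncomputable def oddComponentsCount [Fintype V] (G : SimpleGraph V) (S : Set V) : ℕ :=
  Nat.card {c : (SimpleGraph.induce Sᶜ G).ConnectedComponent // Odd c.supp.ncard}

/-- `G` is factor-critical: deleting any vertex leaves a graph with a perfect matching. -/
def IsFactorCritical (G : SimpleGraph V) : Prop :=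
  ∀ v : V, ∃ M : (SimpleGraph.induce ({v}ᶜ : Set V) G).Subgraph, M.IsPerfectMatching

/-- A graph is 2-edge-connected if it is connected and has no bridges. -/
def IsTwoEdgeConnected (G : SimpleGraph V) : Prop :=
  G.Connected ∧ ∀ e ∈ G.edgeSet, ¬ G.IsBridge e

/-- `B` is the vertex set of a balloon of `G`: a maximal 2-edge-connected subgraph of `G`
incident to exactly one cut-edge (bridge) of `G`. -/
def IsBalloon (G : SimpleGraph V) (B : Set V) : Prop :=
  IsTwoEdgeConnected (SimpleGraph.induce B G) ∧
  (∀ B' : Set V, B ⊆ B' → IsTwoEdgeConnected (SimpleGraph.induce B' G) → B' = B) ∧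
  (∃! e : Sym2 V, G.IsBridge e ∧ ∃ v ∈ e, v ∈ B)

/-- The number of balloons of `G`. -/
noncomputable def balloonCount [Fintype V] (G : SimpleGraph V) : ℕ :=
  Nat.card {B : Set V // IsBalloon G B}

/-- A dumbbell: a graph consisting of exactly two balloons (2-edge-connected pieces)
joined by a single edge. -/
def IsDumbbell (G : SimpleGraph V) : Prop :=
  ∃ B₁ B₂ : Set V, Disjoint B₁ B₂ ∧ B₁ ∪ B₂ = Set.univ ∧
    IsTwoEdgeConnected (SimpleGraph.induce B₁ G) ∧
    IsTwoEdgeConnected (SimpleGraph.induce B₂ G) ∧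
    {e : Sym2 V | e ∈ G.edgeSet ∧ (∃ v ∈ e, v ∈ B₁) ∧ (∃ v ∈ e, v ∈ B₂)}.ncard = 1

/-- The minimum degree of `G`. -/
noncomputable def minDeg [Fintype V] (G : SimpleGraph V) : ℕ :=
  sInf {k | ∃ v : V, (G.neighborSet v).ncard = k}

/-- Number of components `C` of `G - S` such that the number of edges of `G`
between `C` and `S` is odd. -/
noncomputable def qCount [Fintype V] (G : SimpleGraph V) (S : Set V) : ℕ :=
  Nat.card {c : (SimpleGraph.induce Sᶜ G).ConnectedComponent //
    Odd {p : V × V | p.1 ∈ Subtype.val '' c.supp ∧ p.2 ∈ S ∧ G.Adj p.1 p.2}.ncard}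

end Paper

open Matrix in
open scoped RealInnerProductSpace in
theorem core_spectral {ι : Type*} [Fintype ι] [DecidableEq ι] {A : Matrix ι ι ℝ}
    (hA : A.IsHermitian) {a b : ℝ} (ha : 0 < a) (hab : a ≤ b)
    (hb : ∀ i, hA.eigenvalues i ≤ b)
    (hone : ∀ i j, hA.eigenvalues i < a → hA.eigenvalues j < a → i = j)
    (z u v : ι → ℝ) (hz : A *ᵥ z = 0) (hz0 : z ≠ 0)
    (hzu : z ⬝ᵥ u = 0) (hzv : z ⬝ᵥ v = 0) (huv : u ⬝ᵥ (A *ᵥ v) = 0) :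
    ((a + b) * (u ⬝ᵥ v)) ^ 2 ≤ (b - a) ^ 2 * ((u ⬝ᵥ u) * (v ⬝ᵥ v)) := by
  set B := hA.eigenvectorBasis with hB
  set lam := hA.eigenvalues with hlam
  set E : (ι → ℝ) → EuclideanSpace ℝ ι := fun p => (WithLp.equiv 2 _).symm p with hE
  have hAT : Aᵀ = A := by
    rw [← Matrix.conjTranspose_eq_transpose_of_trivial]; exact hA
  have hdot : ∀ p q : ι → ℝ, p ⬝ᵥ q = ∑ j, B.repr (E p) j * B.repr (E q) j := by
    intro p q
    have h1 : ⟪E p, E q⟫ = p ⬝ᵥ q := by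
      rw [PiLp.inner_apply]; simp [hE, dotProduct, mul_comm]
    rw [← h1, ← B.repr.inner_map_map (E p) (E q), PiLp.inner_apply]
    simp [hE, dotProduct, mul_comm]
  have hrepr : ∀ (p : ι → ℝ) (i : ι), B.repr (E p) i = ⇑(B i) ⬝ᵥ p := by
    intro p i
    rw [B.repr_apply_apply, PiLp.inner_apply]
    simp [hE, dotProduct, mul_comm]
  have hAct : ∀ (p : ι → ℝ) (i : ι), B.repr (E (A *ᵥ p)) i = lam i * B.repr (E p) i := by
    intro p i
    rw [hrepr, hrepr]
    calc ⇑(B i) ⬝ᵥ (A *ᵥ p) = (⇑(B i) ᵥ* A) ⬝ᵥ p := dotProduct_mulVec _ _ _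
    _ = (A *ᵥ ⇑(B i)) ⬝ᵥ p := by rw [← mulVec_transpose, hAT]
    _ = lam i * (⇑(B i) ⬝ᵥ p) := by
        rw [hA.mulVec_eigenvectorBasis, smul_dotProduct]; rfl
  set uc : ι → ℝ := fun i => B.repr (E u) i with huc
  set vc : ι → ℝ := fun i => B.repr (E v) i with hvc
  set zc : ι → ℝ := fun i => B.repr (E z) i with hzc
  have hE0 : E 0 = 0 := by simp [hE]
  have hzeig : ∀ i, lam i * zc i = 0 := by
    intro i
    have := hAct z i
    rw [hz, hE0] at this
    simpa using this.symm
  -- main identity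
  have hmain : ∑ i, lam i * (uc i * vc i) = 0 := by
    have h2 := hdot u (A *ᵥ v)
    rw [huv] at h2
    have h3 : ∀ i, B.repr (E u) i * B.repr (E (A *ᵥ v)) i = lam i * (uc i * vc i) := by
      intro i; rw [hAct v i]; ring
    rw [Finset.sum_congr rfl (fun i _ => h3 i)] at h2
    exact h2.symm
  set c : ℝ := (a + b) / 2 with hc
  set K : ℝ := (b - a) / 2 with hK
  have hKnn : 0 ≤ K := by simp [hK]; linarith
  -- per-index bound
  have hperi : ∀ i, |c - lam i| * |uc i * vc i| ≤ K * |uc i * vc i| := by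
    intro i
    by_cases hcase : a ≤ lam i
    · have h1 : |c - lam i| ≤ K := by
        rw [abs_le]; constructor
        · have := hb i; simp only [hc, hK]; linarith
        · simp only [hc, hK]; linarith
      exact mul_le_mul_of_nonneg_right h1 (abs_nonneg _)
    · push_neg at hcase
      have hzi : zc i ≠ 0 := by
        intro h0
        apply hz0
        have hall : ∀ j, zc j = 0 := by
          intro j
          by_cases hji : j = i
          · rw [hji]; exact h0
          · have hj : a ≤ lam j := by
              by_contra hj'
              push_neg at hj'
              exact hji (hone j i hj' hcase)
            have := hzeig j
            have hlj : lam j ≠ 0 := ne_of_gt (lt_of_lt_of_le ha hj)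
            exact (mul_eq_zero.mp this).resolve_left hlj
        have hz2 : z ⬝ᵥ z = 0 := by
          rw [hdot z z]
          apply Finset.sum_eq_zero
          intro j _
          rw [show B.repr (E z) j = zc j from rfl, hall j, mul_zero]
        funext j
        have : z j * z j = 0 := by
          by_contra hne
          have hpos : 0 < ∑ k, z k * z k :=
            Finset.sum_pos' (fun k _ => mul_self_nonneg _)
              ⟨j, Finset.mem_univ j, lt_of_le_of_ne (mul_self_nonneg _) (Ne.symm hne)⟩
          rw [show (∑ k, z k * z k) = z ⬝ᵥ z from rfl, hz2] at hpos
          exact lt_irrefl 0 hpos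
        simpa using mul_self_eq_zero.mp this
      have hucz : uc i = 0 := by
        have h4 := hdot z u
        rw [hzu] at h4
        have h5 : ∀ j, j ≠ i → zc j * uc j = 0 := by
          intro j hj
          have hjl : a ≤ lam j := by
            by_contra hj'
            push_neg at hj'
            exact hj (hone j i hj' hcase)
          have := hzeig j
          have hlj : lam j ≠ 0 := ne_of_gt (lt_of_lt_of_le ha hjl)
          have : zc j = 0 := (mul_eq_zero.mp this).resolve_left hlj
          rw [this, zero_mul]
        have h6 : zc i * uc i = 0 := by
          have hs := Finset.sum_eq_single (s := Finset.univ)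
            (f := fun j => B.repr (E z) j * B.repr (E u) j) i
            (fun j _ hj => h5 j hj) (fun habs => absurd (Finset.mem_univ i) habs)
          exact (h4.trans hs).symm
        exact (mul_eq_zero.mp h6).resolve_left hzi
      rw [hucz]
      simp [hKnn]
  -- assemble
  set t : ℝ := ∑ i, (c - lam i) * (uc i * vc i) with ht
  have h7 : (a + b) * (u ⬝ᵥ v) = 2 * t := by
    rw [hdot u v, ht]
    have : ∑ i, (c - lam i) * (uc i * vc i)
        = c * (∑ i, uc i * vc i) - ∑ i, lam i * (uc i * vc i) := by
      rw [Finset.mul_sum, ← Finset.sum_sub_distrib]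
      apply Finset.sum_congr rfl
      intro i _; ring
    rw [this, hmain, sub_zero, hc]
    ring
  have h8 : |t| ≤ K * ∑ i, |uc i * vc i| := by
    calc |t| ≤ ∑ i, |(c - lam i) * (uc i * vc i)| := Finset.abs_sum_le_sum_abs _ _
    _ = ∑ i, |c - lam i| * |uc i * vc i| := by
        apply Finset.sum_congr rfl; intro i _; rw [abs_mul]
    _ ≤ ∑ i, K * |uc i * vc i| := Finset.sum_le_sum (fun i _ => hperi i)
    _ = K * ∑ i, |uc i * vc i| := by rw [Finset.mul_sum]
  have h9 : (∑ i, |uc i * vc i|) ^ 2 ≤ (∑ i, uc i * uc i) * (∑ i, vc i * vc i) := by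
    have := Finset.sum_mul_sq_le_sq_mul_sq Finset.univ (fun i => |uc i|) (fun i => |vc i|)
    calc (∑ i, |uc i * vc i|) ^ 2 = (∑ i, |uc i| * |vc i|) ^ 2 := by
          congr 1; apply Finset.sum_congr rfl; intro i _; rw [abs_mul]
    _ ≤ (∑ i, |uc i| ^ 2) * ∑ i, |vc i| ^ 2 := this
    _ = (∑ i, uc i * uc i) * (∑ i, vc i * vc i) := by
          congr 1 <;> (apply Finset.sum_congr rfl; intro i _; rw [sq_abs]; ring)
  have h10 : t ^ 2 ≤ K ^ 2 * ((∑ i, uc i * uc i) * (∑ i, vc i * vc i)) := by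
    have habs : t ^ 2 ≤ (K * ∑ i, |uc i * vc i|) ^ 2 := by
      rw [← sq_abs t]
      apply pow_le_pow_left₀ (abs_nonneg t) h8 2
    calc t ^ 2 ≤ (K * ∑ i, |uc i * vc i|) ^ 2 := habs
    _ = K ^ 2 * (∑ i, |uc i * vc i|) ^ 2 := by ring
    _ ≤ K ^ 2 * ((∑ i, uc i * uc i) * (∑ i, vc i * vc i)) := by
        apply mul_le_mul_of_nonneg_left h9 (sq_nonneg K)
  rw [h7, hdot u u, hdot v v]
  calc (2 * t) ^ 2 = 4 * t ^ 2 := by ring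
  _ ≤ 4 * (K ^ 2 * ((∑ i, uc i * uc i) * (∑ i, vc i * vc i))) := by linarith
  _ = (b - a) ^ 2 * ((∑ i, uc i * uc i) * (∑ i, vc i * vc i)) := by
      rw [hK]; ring


private lemma final_algebra (a b xa ya na : ℝ) (hca : 0 < a) (hab : a ≤ b)
    (hxa1 : 1 ≤ xa) (hya1 : 1 ≤ ya) (hxya : xa ≤ ya) (hxyna : xa + ya ≤ na)
    (hcore3 : (a + b) ^ 2 * (xa * ya) ^ 2
      ≤ (b - a) ^ 2 * ((xa * (na - xa)) * (ya * (na - ya)))) :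
    2 * b * xa ≤ (b - a) * na := by
  have hx0 : (0:ℝ) < xa := by linarith
  have hy0 : (0:ℝ) < ya := by linarith
  have hxy : (0:ℝ) < xa * ya := mul_pos hx0 hy0
  have h4 : (a + b) ^ 2 * (xa * ya) ≤ (b - a) ^ 2 * ((na - xa) * (na - ya)) := by
    nlinarith [hcore3, hxy]
  have h6 : xa * (na - ya) ≤ ya * (na - xa) := by nlinarith
  have hba2 : (0:ℝ) ≤ (b - a) ^ 2 * (na - xa) := by nlinarith [sq_nonneg (b - a)]
  have h7 : ((a + b) * xa) ^ 2 * ya ≤ ((b - a) * (na - xa)) ^ 2 * ya := by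
    nlinarith [mul_le_mul_of_nonneg_right h4 hx0.le, mul_le_mul_of_nonneg_left h6 hba2]
  have h8 : ((a + b) * xa) ^ 2 ≤ ((b - a) * (na - xa)) ^ 2 := by
    nlinarith [h7, hy0]
  have hA : (0:ℝ) ≤ (a + b) * xa := by nlinarith
  have hB : (0:ℝ) ≤ (b - a) * (na - xa) := by nlinarith
  have h9 : (a + b) * xa ≤ (b - a) * (na - xa) := by
    nlinarith [h8, hA, hB]
  linarith

open Paper in
/-- Key lemma, part 1: `2·μₙ·|X| ≤ (μₙ − μ₂)·n`. -/
theorem lemma_part_one {n : ℕ} (G : SimpleGraph (Fin n)) (hE : G.edgeSet.Nonempty)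
    (S X Y : Set (Fin n)) (hS : S ⊂ Set.univ) (hdisj : Disjoint X Y)
    (hX : X.Nonempty) (hY : Y.Nonempty) (hUnion : X ∪ Y = Set.univ \ S)
    (hle : X.ncard ≤ Y.ncard) (hNoEdge : ∀ x ∈ X, ∀ y ∈ Y, ¬ G.Adj x y) :
    2 * mu G n * (X.ncard : ℝ) ≤ (mu G n - mu G 2) * (n : ℝ) := by
  letI instDE : DecidableEq (Fin n) := Classical.decEq _
  letI instDR : DecidableRel G.Adj := Classical.decRel _
  -- basic numeric facts
  obtain ⟨e, he⟩ := hE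
  obtain ⟨a0, b0, hadj⟩ : ∃ a0 b0 : Fin n, G.Adj a0 b0 := by
    induction e using Sym2.ind with
    | _ a b => exact ⟨a, b, (SimpleGraph.mem_edgeSet G).mp he⟩
  have hn2 : 2 ≤ n := by
    have h01 : a0 ≠ b0 := hadj.ne
    have h1 : 1 < Fintype.card (Fin n) := Fintype.one_lt_card_iff_nontrivial.mpr ⟨⟨a0, b0, h01⟩⟩
    simp at h1; omega
  have hcard : Fintype.card (Fin n) = n := Fintype.card_fin n
  have hH : (G.lapMatrix ℝ).IsHermitian := (SimpleGraph.posSemidef_lapMatrix ℝ G).isHermitian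
  set f : Fin (Fintype.card (Fin n)) → ℝ :=
    hH.eigenvalues ∘ (Fintype.equivFin (Fin n)).symm with hf
  have hlapEig : lapEig G = f ∘ Tuple.sort f := rfl
  set g : Fin (Fintype.card (Fin n)) → ℝ := f ∘ Tuple.sort f with hg
  have h1lt : 2 - 1 < Fintype.card (Fin n) := by omega
  have hn1lt : n - 1 < Fintype.card (Fin n) := by omega
  have hmu2 : mu G 2 = g ⟨2 - 1, h1lt⟩ := by
    simp only [mu, dif_pos h1lt]
    exact congrFun hlapEig _
  have hmun : mu G n = g ⟨n - 1, hn1lt⟩ := by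
    simp only [mu, dif_pos hn1lt]
    exact congrFun hlapEig _
  set a : ℝ := g ⟨2 - 1, h1lt⟩ with haa
  set b : ℝ := g ⟨n - 1, hn1lt⟩ with hbb
  have hmono : Monotone g := Tuple.monotone_sort f
  have hab : a ≤ b := hmono (by simp [Fin.le_def]; omega)
  have hginv : ∀ k : Fin n, g ((Tuple.sort f)⁻¹ ((Fintype.equivFin (Fin n)) k))
      = hH.eigenvalues k := by
    intro k
    simp [hg, hf, Function.comp, Equiv.Perm.inv_def, Equiv.apply_symm_apply]
  have hbmax : ∀ i : Fin n, hH.eigenvalues i ≤ b := by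
    intro i
    rw [← hginv i]
    apply hmono
    have h3 := ((Tuple.sort f)⁻¹ ((Fintype.equivFin (Fin n)) i)).isLt
    simp only [Fin.le_def]
    omega
  have hone : ∀ i j : Fin n, hH.eigenvalues i < a → hH.eigenvalues j < a → i = j := by
    intro i j hi hj
    have key : ∀ k : Fin n, hH.eigenvalues k < a →
        ((Tuple.sort f)⁻¹ ((Fintype.equivFin (Fin n)) k)).val = 0 := by
      intro k hk
      by_cases hkle : (⟨2 - 1, h1lt⟩ : Fin (Fintype.card (Fin n))) ≤
          (Tuple.sort f)⁻¹ ((Fintype.equivFin (Fin n)) k)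
      · exact absurd (hmono hkle) (not_le.mpr (by rw [hginv k]; exact hk))
      · simp only [Fin.le_def] at hkle
        omega
    have h4 : (Tuple.sort f)⁻¹ ((Fintype.equivFin (Fin n)) i)
        = (Tuple.sort f)⁻¹ ((Fintype.equivFin (Fin n)) j) :=
      Fin.ext ((key i hi).trans (key j hj).symm)
    exact (Fintype.equivFin (Fin n)).injective ((Equiv.injective _) h4)
  have hb0 : 0 ≤ b := by
    have h5 : b = hH.eigenvalues ((Fintype.equivFin (Fin n)).symm
        (Tuple.sort f ⟨n - 1, hn1lt⟩)) := rfl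
    rw [h5]
    exact (SimpleGraph.posSemidef_lapMatrix ℝ G).eigenvalues_nonneg _
  -- combinatorial counting facts
  have hxpos : 0 < X.ncard := (Set.ncard_pos (Set.toFinite X)).mpr hX
  have hypos : 0 < Y.ncard := (Set.ncard_pos (Set.toFinite Y)).mpr hY
  have hxyn : X.ncard + Y.ncard ≤ n := by
    have h3 : (X ∪ Y).ncard = X.ncard + Y.ncard :=
      Set.ncard_union_eq hdisj (Set.toFinite _) (Set.toFinite _)
    have h4 : (X ∪ Y).ncard ≤ (Set.univ : Set (Fin n)).ncard :=
      Set.ncard_le_ncard (Set.subset_univ _) (Set.toFinite _)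
    rw [Set.ncard_univ] at h4
    simp [Nat.card_eq_fintype_card] at h4
    omega
  set xa : ℝ := (X.ncard : ℝ) with hxa
  set ya : ℝ := (Y.ncard : ℝ) with hya
  set na : ℝ := (n : ℝ) with hna
  have hxa1 : 1 ≤ xa := by rw [hxa]; exact_mod_cast hxpos
  have hya1 : 1 ≤ ya := by rw [hya]; exact_mod_cast hypos
  have hxya : xa ≤ ya := by rw [hxa, hya]; exact_mod_cast hle
  have hxyna : xa + ya ≤ na := by rw [hxa, hya, hna]; exact_mod_cast hxyn
  have hnapos : (0 : ℝ) < na := by rw [hna]; exact_mod_cast (by omega : 0 < n)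
  have hnane : na ≠ 0 := ne_of_gt hnapos
  rw [hmun, hmu2]
  clear_value a b
  clear hginv hmono hlapEig hmu2 hmun hg hf g f haa hbb
  rcases le_or_gt a 0 with hca | hca
  · -- easy case : a ≤ 0
    nlinarith [hb0, hca, hxa1, hya1, hxya, hxyna]
  · -- main case : 0 < a
    classical
    set wX : Fin n → ℝ := fun i => if i ∈ X then 1 else 0 with hwX
    set wY : Fin n → ℝ := fun i => if i ∈ Y then 1 else 0 with hwY
    set u : Fin n → ℝ := fun i => wX i - xa / na with hu
    set v : Fin n → ℝ := fun i => wY i - ya / na with hv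
    set z : Fin n → ℝ := fun _ => 1 with hz
    have hsum_ind : ∀ T : Set (Fin n),
        (∑ i, (if i ∈ T then (1 : ℝ) else 0)) = (T.ncard : ℝ) := by
      intro T
      rw [← Finset.sum_filter, Finset.sum_const, nsmul_eq_mul, mul_one]
      norm_cast
      rw [Set.ncard_eq_toFinset_card']
      congr 1
      ext i
      simp [Set.mem_toFinset]
    have hsX : (∑ i, wX i) = xa := by rw [hwX]; exact hsum_ind X
    have hsY : (∑ i, wY i) = ya := by rw [hwY]; exact hsum_ind Y
    have hXY0 : ∀ i, wX i * wY i = 0 := by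
      intro i
      rw [hwX, hwY]
      by_cases h : i ∈ X
      · have h2 : i ∉ Y := fun hYm => (Set.disjoint_left.mp hdisj h) hYm
        simp [h, h2]
      · simp [h]
    have hXX : ∀ i, wX i * wX i = wX i := by
      intro i; rw [hwX]; by_cases h : i ∈ X <;> simp [h]
    have hYY : ∀ i, wY i * wY i = wY i := by
      intro i; rw [hwY]; by_cases h : i ∈ Y <;> simp [h]
    have hsconst : ∀ c : ℝ, (∑ _i : Fin n, c) = na * c := by
      intro c
      rw [Finset.sum_const]
      simp [hcard, hna, nsmul_eq_mul]
    -- dot product computations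
    have hzu : dotProduct z u = 0 := by
      show (∑ i, z i * u i) = 0
      have h6 : ∀ i : Fin n, z i * u i = wX i - xa / na := by
        intro i; simp [hz, hu]
      rw [Finset.sum_congr rfl (fun i _ => h6 i), Finset.sum_sub_distrib, hsX, hsconst]
      field_simp; ring
    have hzv : dotProduct z v = 0 := by
      show (∑ i, z i * v i) = 0
      have h6 : ∀ i : Fin n, z i * v i = wY i - ya / na := by
        intro i; simp [hz, hv]
      rw [Finset.sum_congr rfl (fun i _ => h6 i), Finset.sum_sub_distrib, hsY, hsconst]
      field_simp; ring
    have hLz : Matrix.mulVec (G.lapMatrix ℝ) z = 0 := G.lapMatrix_mulVec_const_eq_zero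
    have hz0 : z ≠ 0 := by
      intro h0
      have h7 := congrFun h0 ⟨0, by omega⟩
      simp [hz] at h7
    have hLt : Matrix.transpose (G.lapMatrix ℝ) = G.lapMatrix ℝ := by
      rw [← Matrix.conjTranspose_eq_transpose_of_trivial]; exact hH
    have hsymL : ∀ w : Fin n → ℝ, dotProduct z (Matrix.mulVec (G.lapMatrix ℝ) w) = 0 := by
      intro w
      rw [Matrix.dotProduct_mulVec]
      have h8 : Matrix.vecMul z (G.lapMatrix ℝ) = 0 := by
        rw [← Matrix.mulVec_transpose, hLt, hLz]
      rw [h8, zero_dotProduct]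
    have huLv : dotProduct u (Matrix.mulVec (G.lapMatrix ℝ) v) = 0 := by
      have hv2 : v = wY - (ya / na) • z := by
        funext i; simp [hv, hz]
      have hLv : Matrix.mulVec (G.lapMatrix ℝ) v = Matrix.mulVec (G.lapMatrix ℝ) wY := by
        rw [hv2, Matrix.mulVec_sub, Matrix.mulVec_smul, hLz, smul_zero, sub_zero]
      have hu2 : u = wX - (xa / na) • z := by
        funext i; simp [hu, hz]
      rw [hLv, hu2, sub_dotProduct, smul_dotProduct, hsymL wY,
        smul_zero, sub_zero]
      show (∑ i, wX i * (Matrix.mulVec (G.lapMatrix ℝ) wY) i) = 0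
      apply Finset.sum_eq_zero
      intro i _
      by_cases hiX : i ∈ X
      · have h5 : (Matrix.mulVec (G.lapMatrix ℝ) wY) i = 0 := by
          show (∑ j, G.lapMatrix ℝ i j * wY j) = 0
          apply Finset.sum_eq_zero
          intro j _
          by_cases hjY : j ∈ Y
          · have hij : i ≠ j := fun hh => (Set.disjoint_left.mp hdisj hiX) (hh ▸ hjY)
            have hL0 : G.lapMatrix ℝ i j = 0 := by
              simp [SimpleGraph.lapMatrix, SimpleGraph.degMatrix, Matrix.sub_apply,
                Matrix.diagonal_apply_ne _ hij, hNoEdge i hiX j hjY]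
            rw [hL0, zero_mul]
          · have h9 : wY j = 0 := by rw [hwY]; simp [hjY]
            rw [h9, mul_zero]
        rw [h5, mul_zero]
      · have h9 : wX i = 0 := by rw [hwX]; simp [hiX]
        rw [h9, zero_mul]
    have huv : dotProduct u v = -(xa * ya / na) := by
      show (∑ i, u i * v i) = -(xa * ya / na)
      have hterm : ∀ i : Fin n, u i * v i =
          wX i * wY i - (ya / na) * wX i - (xa / na) * wY i + (xa / na) * (ya / na) := by
        intro i; simp only [hu, hv]; ring
      rw [Finset.sum_congr rfl (fun i _ => hterm i)]
      rw [Finset.sum_add_distrib, Finset.sum_sub_distrib, Finset.sum_sub_distrib,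
        Finset.sum_eq_zero (fun i _ => hXY0 i), ← Finset.mul_sum, ← Finset.mul_sum,
        hsX, hsY, hsconst]
      field_simp
      ring
    have huu : dotProduct u u = xa - xa ^ 2 / na := by
      show (∑ i, u i * u i) = xa - xa ^ 2 / na
      have hterm : ∀ i : Fin n, u i * u i =
          wX i * wX i - (xa / na) * wX i - (xa / na) * wX i + (xa / na) * (xa / na) := by
        intro i; simp only [hu]; ring
      rw [Finset.sum_congr rfl (fun i _ => hterm i)]
      rw [Finset.sum_add_distrib, Finset.sum_sub_distrib, Finset.sum_sub_distrib,
        Finset.sum_congr rfl (fun i _ => hXX i), ← Finset.mul_sum, ← Finset.mul_sum,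
        hsX, hsconst]
      field_simp
      ring
    have hvv : dotProduct v v = ya - ya ^ 2 / na := by
      show (∑ i, v i * v i) = ya - ya ^ 2 / na
      have hterm : ∀ i : Fin n, v i * v i =
          wY i * wY i - (ya / na) * wY i - (ya / na) * wY i + (ya / na) * (ya / na) := by
        intro i; simp only [hv]; ring
      rw [Finset.sum_congr rfl (fun i _ => hterm i)]
      rw [Finset.sum_add_distrib, Finset.sum_sub_distrib, Finset.sum_sub_distrib,
        Finset.sum_congr rfl (fun i _ => hYY i), ← Finset.mul_sum, ← Finset.mul_sum,
        hsY, hsconst]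
      field_simp
      ring
    have hcore := core_spectral hH hca hab hbmax hone z u v hLz hz0 hzu hzv huLv
    rw [huv, huu, hvv] at hcore
    -- final algebra
    have hyna : ya < na := by linarith
    have hxna : xa < na := by linarith
    have hcore2 : (a + b) ^ 2 * (xa * ya) ^ 2 / na ^ 2
        ≤ (b - a) ^ 2 * ((xa * (na - xa)) * (ya * (na - ya))) / na ^ 2 := by
      have eL : (a + b) ^ 2 * (xa * ya) ^ 2 / na ^ 2
          = ((a + b) * (-(xa * ya / na))) ^ 2 := by field_simp
      have eR : (b - a) ^ 2 * ((xa * (na - xa)) * (ya * (na - ya))) / na ^ 2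
          = (b - a) ^ 2 * ((xa - xa ^ 2 / na) * (ya - ya ^ 2 / na)) := by
        field_simp
      rw [eL, eR]; exact hcore
    have hcore3 : (a + b) ^ 2 * (xa * ya) ^ 2
        ≤ (b - a) ^ 2 * ((xa * (na - xa)) * (ya * (na - ya))) :=
      (div_le_div_iff_of_pos_right (show (0:ℝ) < na ^ 2 by positivity)).mp hcore2
    exact final_algebra a b xa ya na hca hab hxa1 hya1 hxya hxyna hcore3
end

section
/- Let G be a simple graph on n vertices with at least one edge, let S be a proper subset of V(G), and let X and Y be disjoint nonempty vertex subsets with X ∪ Y = V(G) − S, |X| ≤ |Y|, and no edge of G joining a vertex of X to a vertex of Y. Then (μₙ(G) − μ₂(G))·|S| ≥ 2·μ₂(G)·|X|. -/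
open Paper

/-! ### Auxiliary real-number lemmas -/

lemma aux_pencil (q11 q12 q22 n11 n12 n22 T : ℝ)
    (hroot : T^2 - 2*(q11*n22+q22*n11-2*q12*n12)*T
      + 4*(n11*n22-n12^2)*(q11*q22-q12^2) = 0) :
    ∃ u v : ℝ, (u ≠ 0 ∨ v ≠ 0) ∧
      2*(n11*n22-n12^2)*(q11*u^2+2*q12*u*v+q22*v^2)
        = T*(n11*u^2+2*n12*u*v+n22*v^2) := by
  by_cases hcase : 2*(n11*n22-n12^2)*q11 - T*n11 = 0 ∧ 2*(n11*n22-n12^2)*q12 - T*n12 = 0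
  · refine ⟨1, 0, Or.inl one_ne_zero, ?_⟩
    have h := hcase.1
    ring_nf
    ring_nf at h
    linarith
  · refine ⟨2*(n11*n22-n12^2)*q12 - T*n12, -(2*(n11*n22-n12^2)*q11 - T*n11), ?_, ?_⟩
    · by_contra hno
      push_neg at hno
      exact hcase ⟨neg_eq_zero.1 hno.2, hno.1⟩
    · linear_combination ((2*(n11*n22-n12^2)*q11 - T*n11) * (n11*n22-n12^2)) * hroot

lemma aux_quad_nonneg_det (q11 q12 q22 : ℝ)
    (hQnn : ∀ u v : ℝ, 0 ≤ q11*u^2+2*q12*u*v+q22*v^2) :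
    0 ≤ q11*q22 - q12^2 := by
  have h1 : 0 ≤ q11 := by have := hQnn 1 0; linarith
  rcases eq_or_lt_of_le h1 with h0 | hpos
  · have hq12 : q12 = 0 := by
      by_contra hq
      have := hQnn (-(q22+1)/(2*q12)) 1
      rw [← h0] at this
      field_simp at this
      have hq2 : 0 < q12^2 := by positivity
      rw [le_div_iff₀ hq2] at this
      nlinarith [sq_nonneg q12, this]
    rw [hq12, ← h0]; norm_num
  · have := hQnn q12 (-q11)
    have h2 : q11 * (q11*q22 - q12^2) = q11*q12^2+2*q12*q12*(-q11)+q22*(-q11)^2 := by ring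
    nlinarith [this, hpos]

set_option maxHeartbeats 1000000 in
lemma aux_pencil_bounds (q11 q12 q22 n11 n12 n22 m2 mn A B : ℝ)
    (hd : 0 < n11*n22 - n12^2)
    (hNpos : ∀ u v : ℝ, (u ≠ 0 ∨ v ≠ 0) → 0 < n11*u^2+2*n12*u*v+n22*v^2)
    (hQnn : ∀ u v : ℝ, 0 ≤ q11*u^2+2*q12*u*v+q22*v^2)
    (h2 : ∀ u v : ℝ, m2*(n11*u^2+2*n12*u*v+n22*v^2) ≤ q11*u^2+2*q12*u*v+q22*v^2)
    (hn : ∀ u v : ℝ, q11*u^2+2*q12*u*v+q22*v^2 ≤ mn*(n11*u^2+2*n12*u*v+n22*v^2))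
    (hA : 0 < A) (hAB : A < B)
    (key : A*B*(q11*n22+q22*n11-2*q12*n12)^2
      ≥ (A+B)^2*(n11*n22-n12^2)*(q11*q22-q12^2)) :
    m2*B ≤ mn*A := by
  have hdQ : 0 ≤ q11*q22 - q12^2 := aux_quad_nonneg_det q11 q12 q22 hQnn
  set bb := q11*n22+q22*n11-2*q12*n12 with hbb
  set d := n11*n22-n12^2 with hdd
  set dQ := q11*q22-q12^2 with hdQdef
  have hABpos : 0 < A*B := mul_pos hA (hA.trans hAB)
  have hdisc : 0 ≤ bb^2 - 4*d*dQ := by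
    nlinarith [key, sq_nonneg (A-B), mul_nonneg hd.le hdQ, hABpos]
  set r := Real.sqrt (bb^2 - 4*d*dQ) with hrdef
  have hr0 : 0 ≤ r := Real.sqrt_nonneg _
  have hr2 : r^2 = bb^2 - 4*d*dQ := Real.sq_sqrt hdisc
  obtain ⟨u1, v1, hw1, he1⟩ := aux_pencil q11 q12 q22 n11 n12 n22 (bb - r)
    (by rw [← hbb, ← hdd, ← hdQdef]; linear_combination hr2)
  obtain ⟨u2, v2, hw2, he2⟩ := aux_pencil q11 q12 q22 n11 n12 n22 (bb + r)
    (by rw [← hbb, ← hdd, ← hdQdef]; linear_combination hr2)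
  rw [← hdd] at he1 he2
  have hN1 := hNpos u1 v1 hw1
  have hN2 := hNpos u2 v2 hw2
  have hQ1 := hQnn u1 v1
  have hh2 := h2 u1 v1
  have hhn := hn u2 v2
  set N1 := n11*u1^2+2*n12*u1*v1+n22*v1^2 with hN1def
  set N2 := n11*u2^2+2*n12*u2*v2+n22*v2^2 with hN2def
  set Q1 := q11*u1^2+2*q12*u1*v1+q22*v1^2 with hQ1def
  set Q2 := q11*u2^2+2*q12*u2*v2+q22*v2^2 with hQ2def
  clear_value bb d dQ r N1 N2 Q1 Q2
  clear hbb hdd hdQdef hrdef hN1def hN2def hQ1def hQ2def hNpos hQnn h2 hn hdisc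
  have hm2T1 : 2*d*m2 ≤ bb - r := by
    have h' : 2*d*m2*N1 ≤ (bb - r)*N1 := by
      rw [← he1]; nlinarith [mul_le_mul_of_nonneg_left hh2 (by linarith : (0:ℝ) ≤ 2*d)]
    exact le_of_mul_le_mul_right (by linarith) hN1
  have hmnT2 : bb + r ≤ 2*d*mn := by
    have h' : (bb + r)*N2 ≤ 2*d*mn*N2 := by
      rw [← he2]; nlinarith [mul_le_mul_of_nonneg_left hhn (by linarith : (0:ℝ) ≤ 2*d)]
    exact le_of_mul_le_mul_right (by linarith) hN2
  have hT1nn : 0 ≤ bb - r := by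
    have h' : 0 ≤ (bb - r)*N1 := by rw [← he1]; positivity
    nlinarith [h', hN1]
  have hprod : (bb-r)*(bb+r) = 4*d*dQ := by linear_combination -hr2
  by_cases hm2 : m2 ≤ 0
  · have hmn0 : 0 ≤ mn := by nlinarith [hmnT2, hr0, hT1nn, hd]
    have h1 : m2*B ≤ 0 := mul_nonpos_of_nonpos_of_nonneg hm2 (by linarith)
    have h2' : 0 ≤ mn*A := mul_nonneg hmn0 hA.le
    linarith
  · push_neg at hm2
    have hT1pos : 0 < bb - r := lt_of_lt_of_le (by nlinarith [hm2, hd]) hm2T1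
    have key2 : A*B*((bb-r)+(bb+r))^2 ≥ (A+B)^2*((bb-r)*(bb+r)) := by
      rw [hprod]; nlinarith [key]
    have hfac : (A*(bb+r) - B*(bb-r)) * (B*(bb+r) - A*(bb-r)) ≥ 0 := by nlinarith [key2]
    have hsecond : 0 < B*(bb+r) - A*(bb-r) := by nlinarith [hT1pos, hr0, hAB, hA]
    have hfirst : 0 ≤ A*(bb+r) - B*(bb-r) := by
      by_contra hcon
      push_neg at hcon
      nlinarith [hfac, hsecond, mul_pos (neg_pos.2 hcon) hsecond]
    have chain : 2*d*(m2*B) ≤ 2*d*(mn*A) := by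
      have s1 : 2*d*m2*B ≤ (bb-r)*B := mul_le_mul_of_nonneg_right hm2T1 (by linarith)
      have s2 : (bb-r)*B ≤ (bb+r)*A := by nlinarith [hfirst]
      have s3 : (bb+r)*A ≤ 2*d*mn*A := mul_le_mul_of_nonneg_right hmnT2 hA.le
      nlinarith [s1, s2, s3]
    exact le_of_mul_le_mul_left chain (by linarith)

set_option maxHeartbeats 1000000 in
/-- The core inequality on real numbers. -/
lemma core_ineq (x y s E1 E2 m2 mn : ℝ) (hx : 0 < x) (hxy : x ≤ y) (hs : 0 < s)
    (hE1 : 0 ≤ E1) (hE2 : 0 ≤ E2)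
    (h2 : ∀ u v : ℝ, m2 * (s^2*x*u^2 + s^2*y*v^2 + s*(u*x+v*y)^2) ≤
      E1*(u*(s+x)+v*y)^2 + E2*(u*x+v*(s+y))^2)
    (hn : ∀ u v : ℝ, E1*(u*(s+x)+v*y)^2 + E2*(u*x+v*(s+y))^2 ≤
      mn * (s^2*x*u^2 + s^2*y*v^2 + s*(u*x+v*y)^2)) :
    m2 * (s + 2*x) ≤ mn * s := by
  have hy : 0 < y := lt_of_lt_of_le hx hxy
  have hQ : ∀ u v : ℝ, E1*(u*(s+x)+v*y)^2 + E2*(u*x+v*(s+y))^2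
      = (E1*(s+x)^2 + E2*x^2)*u^2 + 2*(E1*(s+x)*y + E2*x*(s+y))*u*v
        + (E1*y^2 + E2*(s+y)^2)*v^2 := by intro u v; ring
  have hN : ∀ u v : ℝ, s^2*x*u^2 + s^2*y*v^2 + s*(u*x+v*y)^2
      = (s^2*x + s*x^2)*u^2 + 2*(s*x*y)*u*v + (s^2*y + s*y^2)*v^2 := by intro u v; ring
  have key0 : (E1*(s+x)*y + E2*(s+y)*x)^2*(s+2*x) ≥ 4*(s+x)^2*(x*y*(x+y+s))*(E1*E2) := by
    have c1 : 0 ≤ (s+2*x)*(E1*(s+x)*y - E2*(s+y)*x)^2 := by positivity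
    have c2 : 0 ≤ 4*E1*E2*x*y*(s+x)*(x*(y-x)) := by
      have : (0:ℝ) ≤ x*(y-x) := mul_nonneg hx.le (by linarith)
      have h4 : (0:ℝ) ≤ 4*E1*E2*x*y*(s+x) := by positivity
      exact mul_nonneg h4 this
    nlinarith [c1, c2]
  apply aux_pencil_bounds (E1*(s+x)^2 + E2*x^2) (E1*(s+x)*y + E2*x*(s+y))
      (E1*y^2 + E2*(s+y)^2) (s^2*x + s*x^2) (s*x*y) (s^2*y + s*y^2) m2 mn s (s+2*x)
  · have : (s^2*x + s*x^2)*(s^2*y + s*y^2) - (s*x*y)^2 = s^3*x*y*(x+y+s) := by ring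
    rw [this]; positivity
  · intro u v huv
    rw [← hN u v]
    rcases huv with h | h
    · have h1 : 0 < s^2*x*u^2 := by positivity
      have h2' : 0 ≤ s^2*y*v^2 := by positivity
      have h3 : 0 ≤ s*(u*x+v*y)^2 := by positivity
      linarith
    · have h1 : 0 ≤ s^2*x*u^2 := by positivity
      have h2' : 0 < s^2*y*v^2 := by positivity
      have h3 : 0 ≤ s*(u*x+v*y)^2 := by positivity
      linarith
  · intro u v
    rw [← hQ u v]; positivity
  · intro u v; rw [← hQ u v, ← hN u v]; exact h2 u v
  · intro u v; rw [← hQ u v, ← hN u v]; exact hn u v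
  · exact hs
  · linarith
  · -- key: s(s+2x) bb^2 ≥ (2s+2x)^2 d dQ
    have e1 : (E1*(s+x)^2 + E2*x^2)*(s^2*y + s*y^2) + (E1*y^2 + E2*(s+y)^2)*(s^2*x + s*x^2)
        - 2*(E1*(s+x)*y + E2*x*(s+y))*(s*x*y)
        = s^2*(x+y+s)*(E1*(s+x)*y + E2*(s+y)*x) := by ring
    have e2 : ((s^2*x + s*x^2)*(s^2*y + s*y^2) - (s*x*y)^2) = s^3*x*y*(x+y+s) := by ring
    have e3 : ((E1*(s+x)^2 + E2*x^2)*(E1*y^2 + E2*(s+y)^2) - (E1*(s+x)*y + E2*x*(s+y))^2)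
        = E1*E2*s^2*(x+y+s)^2 := by ring
    rw [e1, e2, e3]
    have expand : s*(s+2*x)*(s^2*(x+y+s)*(E1*(s+x)*y + E2*(s+y)*x))^2
        - (s+(s+2*x))^2*(s^3*x*y*(x+y+s))*(E1*E2*s^2*(x+y+s)^2)
        = s^5*(x+y+s)^2 * ((E1*(s+x)*y + E2*(s+y)*x)^2*(s+2*x)
            - 4*(s+x)^2*(x*y*(x+y+s))*(E1*E2)) := by ring
    nlinarith [mul_le_mul_of_nonneg_left (sub_nonneg.2 key0)
      (by positivity : (0:ℝ) ≤ s^5*(x+y+s)^2), expand]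

open scoped RealInnerProductSpace
open Matrix

/-! ### Spectral lemmas -/

noncomputable def toE {V : Type*} [Fintype V] : (V → ℝ) → EuclideanSpace ℝ V :=
  (WithLp.equiv 2 (V → ℝ)).symm

section spectral

variable {V : Type*} [Fintype V] (G : SimpleGraph V)

noncomputable local instance : DecidableEq V := Classical.decEq V
noncomputable local instance : DecidableRel G.Adj := Classical.decRel _

lemma inner_toE (f g : V → ℝ) : ⟪toE f, toE g⟫ = ∑ v, f v * g v := by
  simp [toE, PiLp.inner_apply, RCLike.inner_apply, conj_trivial]
  exact Finset.sum_congr rfl fun v _ => mul_comm _ _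

lemma inner_toE_mulVec (A : Matrix V V ℝ) (hA : A.IsHermitian) (x y : V → ℝ) :
    ⟪toE x, toE (A.mulVec y)⟫ = ⟪toE (A.mulVec x), toE y⟫ := by
  rw [inner_toE, inner_toE]
  have h1 : ∑ i, x i * (A.mulVec y) i = dotProduct x (A.mulVec y) := rfl
  have h2 : ∑ i, (A.mulVec x) i * y i = dotProduct (A.mulVec x) y := rfl
  rw [h1, h2, Matrix.dotProduct_mulVec, ← Matrix.mulVec_transpose]
  have hsym : Aᵀ = A := by
    have h := hA
    rwa [Matrix.IsHermitian, Matrix.conjTranspose_eq_transpose_of_trivial] at h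
  rw [hsym]

lemma inner_eig_mulVec (A : Matrix V V ℝ) (hA : A.IsHermitian) (j : V) (f : V → ℝ) :
    ⟪hA.eigenvectorBasis j, toE (A.mulVec f)⟫
      = hA.eigenvalues j * ⟪hA.eigenvectorBasis j, toE f⟫ := by
  have hb : toE (A.mulVec ⇑(hA.eigenvectorBasis j))
      = hA.eigenvalues j • (hA.eigenvectorBasis j) := by
    have h := hA.mulVec_eigenvectorBasis j
    apply PiLp.ext
    intro v
    have hv := congrFun h v
    simpa [toE] using hv
  have hu : toE (⇑(hA.eigenvectorBasis j)) = hA.eigenvectorBasis j := rfl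
  calc ⟪hA.eigenvectorBasis j, toE (A.mulVec f)⟫
      = ⟪toE (⇑(hA.eigenvectorBasis j)), toE (A.mulVec f)⟫ := by rw [hu]
    _ = ⟪toE (A.mulVec (⇑(hA.eigenvectorBasis j))), toE f⟫ := inner_toE_mulVec A hA _ f
    _ = ⟪hA.eigenvalues j • (hA.eigenvectorBasis j), toE f⟫ := by rw [hb]
    _ = hA.eigenvalues j * ⟪hA.eigenvectorBasis j, toE f⟫ := real_inner_smul_left _ _ _

lemma quad_decomp (A : Matrix V V ℝ) (hA : A.IsHermitian) (f : V → ℝ) :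
    ∑ v, f v * (A.mulVec f) v
      = ∑ j, hA.eigenvalues j * ⟪hA.eigenvectorBasis j, toE f⟫^2 := by
  rw [← inner_toE]
  rw [← OrthonormalBasis.sum_inner_mul_inner hA.eigenvectorBasis (toE f) (toE (A.mulVec f))]
  refine Finset.sum_congr rfl fun j _ => ?_
  rw [inner_eig_mulVec A hA j f, real_inner_comm]
  ring

lemma norm_decomp (A : Matrix V V ℝ) (hA : A.IsHermitian) (f : V → ℝ) :
    ∑ v, f v * f v = ∑ j, ⟪hA.eigenvectorBasis j, toE f⟫^2 := by
  rw [← inner_toE]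
  rw [← OrthonormalBasis.sum_inner_mul_inner hA.eigenvectorBasis (toE f) (toE f)]
  refine Finset.sum_congr rfl fun j _ => ?_
  rw [real_inner_comm]
  ring

/-- `lapEig` unfolds. -/
lemma lapEig_eq :
    lapEig G = ((SimpleGraph.posSemidef_lapMatrix ℝ G).isHermitian.eigenvalues
        ∘ (Fintype.equivFin V).symm)
      ∘ Tuple.sort ((SimpleGraph.posSemidef_lapMatrix ℝ G).isHermitian.eigenvalues
        ∘ (Fintype.equivFin V).symm) := rfl

lemma lapEig_monotone : Monotone (lapEig G) := by
  rw [lapEig_eq]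
  exact Tuple.monotone_sort _

lemma eigenvalues_eq_lapEig (j : V) :
    (SimpleGraph.posSemidef_lapMatrix ℝ G).isHermitian.eigenvalues j
      = lapEig G ((Tuple.sort ((SimpleGraph.posSemidef_lapMatrix ℝ G).isHermitian.eigenvalues
          ∘ (Fintype.equivFin V).symm)).symm ((Fintype.equivFin V) j)) := by
  rw [lapEig_eq]
  simp

lemma lapEig_nonneg (k : Fin (Fintype.card V)) : 0 ≤ lapEig G k := by
  rw [lapEig_eq]
  exact (SimpleGraph.posSemidef_lapMatrix ℝ G).eigenvalues_nonneg _

lemma mu_nonneg (i : ℕ) : 0 ≤ mu G i := by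
  rw [mu]
  split
  · exact lapEig_nonneg G _
  · exact le_rfl

/-- every eigenvalue is at most `mu G (card V)` -/
lemma eigenvalues_le_muN (j : V) :
    (SimpleGraph.posSemidef_lapMatrix ℝ G).isHermitian.eigenvalues j
      ≤ mu G (Fintype.card V) := by
  have hcard : 0 < Fintype.card V := Fintype.card_pos_iff.2 ⟨j⟩
  have hmu : mu G (Fintype.card V) = lapEig G ⟨Fintype.card V - 1, by omega⟩ := by
    rw [mu, dif_pos]
  rw [hmu, eigenvalues_eq_lapEig G j]
  refine lapEig_monotone G ?_
  rw [Fin.le_def]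
  exact Nat.le_pred_of_lt ((Tuple.sort ((SimpleGraph.posSemidef_lapMatrix ℝ G).isHermitian.eigenvalues
          ∘ (Fintype.equivFin V).symm)).symm ((Fintype.equivFin V) j)).isLt

lemma quad_le_muN (f : V → ℝ) :
    ∑ v, f v * ((G.lapMatrix ℝ).mulVec f) v
      ≤ mu G (Fintype.card V) * ∑ v, f v * f v := by
  set hA := (SimpleGraph.posSemidef_lapMatrix ℝ G).isHermitian
  rw [quad_decomp (G.lapMatrix ℝ) hA f, norm_decomp (G.lapMatrix ℝ) hA f, Finset.mul_sum]
  refine Finset.sum_le_sum fun j _ => ?_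
  exact mul_le_mul_of_nonneg_right (eigenvalues_le_muN G j) (sq_nonneg _)

set_option maxHeartbeats 800000 in
lemma mu2_le_quad (hmu2 : 0 < mu G 2) (f : V → ℝ) (hsum : ∑ v, f v = 0) :
    mu G 2 * (∑ v, f v * f v) ≤ ∑ v, f v * ((G.lapMatrix ℝ).mulVec f) v := by
  set hA := (SimpleGraph.posSemidef_lapMatrix ℝ G).isHermitian with hAdef
  set σ := Tuple.sort (hA.eigenvalues ∘ (Fintype.equivFin V).symm) with hσ
  -- card ≥ 2
  have h2card : 1 < Fintype.card V := by
    by_contra hc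
    rw [mu, dif_neg (by omega)] at hmu2
    exact lt_irrefl 0 hmu2
  have hmu2eq : mu G 2 = lapEig G ⟨1, by omega⟩ := by
    rw [mu, dif_pos]
  -- constant vector is in the kernel
  have hko : (G.lapMatrix ℝ).mulVec (fun _ => (1:ℝ)) = 0 :=
    SimpleGraph.lapMatrix_mulVec_const_eq_zero G
  -- coefficients of the constant vector
  have hdz : ∀ j : V, hA.eigenvalues j * ⟪hA.eigenvectorBasis j, toE (fun _ => (1:ℝ))⟫ = 0 := by
    intro j
    rw [← inner_eig_mulVec (G.lapMatrix ℝ) hA j (fun _ => (1:ℝ)), hko]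
    have : toE (V := V) (0 : V → ℝ) = 0 := rfl
    rw [this, inner_zero_right]
  have hVne : Nonempty V := Fintype.card_pos_iff.1 (by omega)
  obtain ⟨v0⟩ := hVne
  -- some coefficient is nonzero
  have hexists : ∃ i0 : V, ⟪hA.eigenvectorBasis i0, toE (fun _ => (1:ℝ))⟫ ≠ 0 := by
    by_contra hno
    push_neg at hno
    have hone : toE (fun _ => (1:ℝ)) = (0 : EuclideanSpace ℝ V) := by
      rw [← OrthonormalBasis.sum_repr' hA.eigenvectorBasis (toE (fun _ => (1:ℝ)))]
      refine Finset.sum_eq_zero fun j _ => ?_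
      rw [hno j, zero_smul]
    have := congrFun (congrArg (WithLp.equiv 2 (V → ℝ)) hone) v0
    simp [toE] at this
  obtain ⟨i0, hi0⟩ := hexists
  have hev0 : hA.eigenvalues i0 = 0 := by
    rcases mul_eq_zero.1 (hdz i0) with h | h
    · exact h
    · exact absurd h hi0
  -- every other eigenvalue is at least mu G 2
  have hother : ∀ j : V, j ≠ i0 → mu G 2 ≤ hA.eigenvalues j := by
    intro j hj
    set kj := σ.symm ((Fintype.equivFin V) j) with hkj
    set k0 := σ.symm ((Fintype.equivFin V) i0) with hk0
    have hkne : kj ≠ k0 := fun h => hj ((Fintype.equivFin V).injective (σ.symm.injective h))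
    have hevj : hA.eigenvalues j = lapEig G kj := eigenvalues_eq_lapEig G j
    have hev0' : hA.eigenvalues i0 = lapEig G k0 := eigenvalues_eq_lapEig G i0
    by_cases hval : 1 ≤ (kj : ℕ)
    · rw [hmu2eq, hevj]
      exact lapEig_monotone G (by rw [Fin.le_def]; exact hval)
    · exfalso
      have hkj0 : (kj : ℕ) = 0 := by omega
      have hk0ge : 1 ≤ (k0 : ℕ) := by
        rcases Nat.eq_zero_or_pos (k0 : ℕ) with h0 | h0
        · exact absurd (Fin.ext (hkj0.trans h0.symm)) hkne
        · exact h0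
      have : mu G 2 ≤ lapEig G k0 := by
        rw [hmu2eq]
        exact lapEig_monotone G (by rw [Fin.le_def]; exact hk0ge)
      rw [← hev0', hev0] at this
      linarith
  -- coefficient of f in direction i0 vanishes
  have hd0 : ∀ j : V, j ≠ i0 → ⟪hA.eigenvectorBasis j, toE (fun _ => (1:ℝ))⟫ = 0 := by
    intro j hj
    rcases mul_eq_zero.1 (hdz j) with h | h
    · exfalso; have := hother j hj; rw [h] at this; linarith
    · exact h
  have hone_repr : toE (fun _ => (1:ℝ))
      = ⟪hA.eigenvectorBasis i0, toE (fun _ => (1:ℝ))⟫ • hA.eigenvectorBasis i0 := by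
    conv_lhs => rw [← OrthonormalBasis.sum_repr' hA.eigenvectorBasis (toE (fun _ => (1:ℝ)))]
    exact Finset.sum_eq_single_of_mem i0 (Finset.mem_univ i0)
      fun j _ hj => by rw [hd0 j hj, zero_smul]
  have hc0 : ⟪hA.eigenvectorBasis i0, toE f⟫ = 0 := by
    have hof : ⟪toE (fun _ => (1:ℝ)), toE f⟫ = 0 := by
      rw [inner_toE]; simpa using hsum
    rw [hone_repr, real_inner_smul_left] at hof
    rcases mul_eq_zero.1 hof with h | h
    · exact absurd h hi0
    · exact h
  -- conclude
  rw [quad_decomp (G.lapMatrix ℝ) hA f, norm_decomp (G.lapMatrix ℝ) hA f, Finset.mul_sum]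
  refine Finset.sum_le_sum fun j _ => ?_
  by_cases hj : j = i0
  · rw [hj, hc0]
    simp
  · exact mul_le_mul_of_nonneg_right (hother j hj) (sq_nonneg _)


/-! ### Combinatorial evaluation of the quadratic form -/

open Classical in
/-- real-valued indicator -/
noncomputable def chi {V : Type*} (X : Set V) (v : V) : ℝ := if v ∈ X then 1 else 0

lemma chi_pos {V : Type*} {X : Set V} {v : V} (h : v ∈ X) : chi X v = 1 := by
  simp only [chi]; rw [if_pos h]

lemma chi_neg {V : Type*} {X : Set V} {v : V} (h : v ∉ X) : chi X v = 0 := by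
  simp only [chi]; rw [if_neg h]

lemma chi_nonneg {V : Type*} (X : Set V) (v : V) : 0 ≤ chi X v := by
  simp only [chi]; split <;> norm_num


lemma sum_chi (X : Set V) : ∑ v, chi X v = (X.ncard : ℝ) := by
  classical
  have h1 : ∑ v, chi X v = ((Finset.univ.filter (fun v => v ∈ X)).card : ℝ) := by
    rw [← Finset.sum_boole]
    refine Finset.sum_congr rfl fun v _ => ?_
    simp only [chi]
  rw [h1, Set.ncard_eq_toFinset_card' X]
  congr 1
  congr 1
  ext v
  simp

/-- the (real) number of ordered adjacent pairs between `X` and `S`. -/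
noncomputable def eCount (X S : Set V) : ℝ :=
  ∑ i, ∑ j, chi X i * chi S j * (if G.Adj i j then (1:ℝ) else 0)

lemma eCount_nonneg (X S : Set V) : 0 ≤ eCount G X S := by
  rw [eCount]
  refine Finset.sum_nonneg fun i _ => Finset.sum_nonneg fun j _ => ?_
  have h1 := chi_nonneg X i
  have h2 := chi_nonneg S j
  split <;> nlinarith

lemma eCount_empty (X : Set V) : eCount G X ∅ = 0 := by
  rw [eCount]
  refine Finset.sum_eq_zero fun i _ => Finset.sum_eq_zero fun j _ => ?_
  rw [chi_neg (Set.notMem_empty j)]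
  ring

lemma sum_fv (X Y S : Set V) (a b c : ℝ) :
    ∑ v, (a * chi X v + b * chi Y v + c * chi S v)
      = a * (X.ncard : ℝ) + b * (Y.ncard : ℝ) + c * (S.ncard : ℝ) := by
  rw [Finset.sum_add_distrib, Finset.sum_add_distrib, ← Finset.mul_sum, ← Finset.mul_sum,
    ← Finset.mul_sum, sum_chi, sum_chi, sum_chi]

lemma sum_fv_sq (X Y S : Set V)
    (hXY : ∀ v ∈ X, v ∉ Y) (hXS : ∀ v ∈ X, v ∉ S) (hYS : ∀ v ∈ Y, v ∉ S)
    (hcover : ∀ v, v ∈ X ∨ v ∈ Y ∨ v ∈ S) (a b c : ℝ) :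
    ∑ v, (a * chi X v + b * chi Y v + c * chi S v) * (a * chi X v + b * chi Y v + c * chi S v)
      = a^2 * (X.ncard : ℝ) + b^2 * (Y.ncard : ℝ) + c^2 * (S.ncard : ℝ) := by
  have hpt : ∀ v, (a * chi X v + b * chi Y v + c * chi S v) * (a * chi X v + b * chi Y v + c * chi S v)
      = a^2 * chi X v + b^2 * chi Y v + c^2 * chi S v := by
    intro v
    rcases hcover v with hv | hv | hv
    · rw [chi_pos hv, chi_neg (hXY v hv), chi_neg (hXS v hv)]; ring
    · rw [chi_neg (fun h => hXY v h hv), chi_pos hv, chi_neg (hYS v hv)]; ring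
    · rw [chi_neg (fun h => hXS v h hv), chi_neg (fun h => hYS v h hv), chi_pos hv]; ring
  calc ∑ v, (a * chi X v + b * chi Y v + c * chi S v) * (a * chi X v + b * chi Y v + c * chi S v)
      = ∑ v, (a^2 * chi X v + b^2 * chi Y v + c^2 * chi S v) :=
        Finset.sum_congr rfl fun v _ => hpt v
    _ = _ := sum_fv X Y S (a^2) (b^2) (c^2)

lemma quad_fv (X Y S : Set V)
    (hXY : ∀ v ∈ X, v ∉ Y) (hXS : ∀ v ∈ X, v ∉ S) (hYS : ∀ v ∈ Y, v ∉ S)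
    (hcover : ∀ v, v ∈ X ∨ v ∈ Y ∨ v ∈ S)
    (hNoEdge : ∀ x ∈ X, ∀ y ∈ Y, ¬ G.Adj x y) (a b c : ℝ) :
    ∑ v, (a * chi X v + b * chi Y v + c * chi S v)
        * ((G.lapMatrix ℝ).mulVec (fun w => a * chi X w + b * chi Y w + c * chi S w)) v
      = (a-c)^2 * eCount G X S + (b-c)^2 * eCount G Y S := by
  set f : V → ℝ := fun w => a * chi X w + b * chi Y w + c * chi S w with hf
  have h0 : ∑ v, f v * ((G.lapMatrix ℝ).mulVec f) v
      = (∑ i, ∑ j, if G.Adj i j then (f i - f j)^2 else 0)/2 := by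
    rw [← SimpleGraph.lapMatrix_toLinearMap₂' (G := G) ℝ f, Matrix.toLinearMap₂'_apply']
    rfl
  have hvX : ∀ i, i ∈ X → f i = a := by
    intro i hv
    simp only [hf]
    rw [chi_pos hv, chi_neg (hXY i hv), chi_neg (hXS i hv)]; ring
  have hvY : ∀ i, i ∈ Y → f i = b := by
    intro i hv
    simp only [hf]
    rw [chi_neg (fun h => hXY i h hv), chi_pos hv, chi_neg (hYS i hv)]; ring
  have hvS : ∀ i, i ∈ S → f i = c := by
    intro i hv
    simp only [hf]
    rw [chi_neg (fun h => hXS i h hv), chi_neg (fun h => hYS i h hv), chi_pos hv]; ring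
  have hpt : ∀ i j, (if G.Adj i j then (f i - f j)^2 else 0)
      = (a-c)^2 * (chi X i * chi S j * (if G.Adj i j then (1:ℝ) else 0))
        + (a-c)^2 * (chi S i * chi X j * (if G.Adj i j then (1:ℝ) else 0))
        + ((b-c)^2 * (chi Y i * chi S j * (if G.Adj i j then (1:ℝ) else 0))
        + (b-c)^2 * (chi S i * chi Y j * (if G.Adj i j then (1:ℝ) else 0))) := by
    intro i j
    by_cases hadj : G.Adj i j
    · rw [if_pos hadj, if_pos hadj]
      rcases hcover i with hi | hi | hi <;> rcases hcover j with hj | hj | hj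
      · rw [hvX i hi, hvX j hj, chi_pos hi, chi_pos hj, chi_neg (hXS i hi), chi_neg (hXS j hj),
          chi_neg (hXY i hi), chi_neg (hXY j hj)]
        ring
      · exact absurd hadj (hNoEdge i hi j hj)
      · rw [hvX i hi, hvS j hj, chi_pos hi, chi_pos hj, chi_neg (hXS i hi),
          chi_neg (fun h => hXS j h hj), chi_neg (hXY i hi), chi_neg (fun h => hYS j h hj)]
        ring
      · exact absurd (hadj.symm) (hNoEdge j hj i hi)
      · rw [hvY i hi, hvY j hj, chi_neg (fun h => hXY i h hi), chi_neg (fun h => hXY j h hj),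
          chi_neg (hYS i hi), chi_neg (hYS j hj), chi_pos hi, chi_pos hj]
        ring
      · rw [hvY i hi, hvS j hj, chi_neg (fun h => hXY i h hi), chi_neg (fun h => hXS j h hj),
          chi_neg (hYS i hi), chi_pos hj, chi_pos hi, chi_neg (fun h => hYS j h hj)]
        ring
      · rw [hvS i hi, hvX j hj, chi_neg (fun h => hXS i h hi), chi_pos hj, chi_pos hi,
          chi_neg (hXS j hj), chi_neg (fun h => hYS i h hi), chi_neg (hXY j hj)]
        ring
      · rw [hvS i hi, hvY j hj, chi_neg (fun h => hXS i h hi), chi_neg (fun h => hXY j h hj),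
          chi_pos hi, chi_neg (hYS j hj), chi_neg (fun h => hYS i h hi), chi_pos hj]
        ring
      · rw [hvS i hi, hvS j hj, chi_pos hi, chi_pos hj, chi_neg (fun h => hXS i h hi),
          chi_neg (fun h => hXS j h hj), chi_neg (fun h => hYS i h hi),
          chi_neg (fun h => hYS j h hj)]
        ring
    · rw [if_neg hadj, if_neg hadj]
      ring
  have pull : ∀ (k : ℝ) (g : V → V → ℝ), ∑ i, ∑ j, k * g i j = k * ∑ i, ∑ j, g i j := by
    intro k g
    rw [Finset.mul_sum]
    exact Finset.sum_congr rfl fun i _ => by rw [Finset.mul_sum]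
  have swap : ∀ X' : Set V, ∑ i, ∑ j, chi S i * chi X' j * (if G.Adj i j then (1:ℝ) else 0)
      = ∑ i, ∑ j, chi X' i * chi S j * (if G.Adj i j then (1:ℝ) else 0) := by
    intro X'
    rw [Finset.sum_comm]
    refine Finset.sum_congr rfl fun i _ => Finset.sum_congr rfl fun j _ => ?_
    rw [if_congr (G.adj_comm j i) rfl rfl]
    ring
  have hsum2 : ∑ i, ∑ j, (if G.Adj i j then (f i - f j)^2 else 0)
      = (a-c)^2 * eCount G X S + (a-c)^2 * eCount G X S
        + ((b-c)^2 * eCount G Y S + (b-c)^2 * eCount G Y S) := by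
    calc ∑ i, ∑ j, (if G.Adj i j then (f i - f j)^2 else 0)
        = ∑ i, ∑ j, ((a-c)^2 * (chi X i * chi S j * (if G.Adj i j then (1:ℝ) else 0))
            + (a-c)^2 * (chi S i * chi X j * (if G.Adj i j then (1:ℝ) else 0))
            + ((b-c)^2 * (chi Y i * chi S j * (if G.Adj i j then (1:ℝ) else 0))
            + (b-c)^2 * (chi S i * chi Y j * (if G.Adj i j then (1:ℝ) else 0)))) :=
          Finset.sum_congr rfl fun i _ => Finset.sum_congr rfl fun j _ => hpt i j
      _ = _ := by
          simp only [Finset.sum_add_distrib]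
          rw [pull ((a-c)^2), pull ((a-c)^2), pull ((b-c)^2), pull ((b-c)^2),
            swap X, swap Y, eCount, eCount]
  rw [h0, hsum2]
  ring


end spectral

open Paper in
/-- Key lemma, part 2: `(μₙ − μ₂)·|S| ≥ 2·μ₂·|X|`. -/
theorem lemma_part_two {n : ℕ} (G : SimpleGraph (Fin n)) (hE : G.edgeSet.Nonempty)
    (S X Y : Set (Fin n)) (hS : S ⊂ Set.univ) (hdisj : Disjoint X Y)
    (hX : X.Nonempty) (hY : Y.Nonempty) (hUnion : X ∪ Y = Set.univ \ S)
    (hle : X.ncard ≤ Y.ncard) (hNoEdge : ∀ x ∈ X, ∀ y ∈ Y, ¬ G.Adj x y) :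
    (mu G n - mu G 2) * (S.ncard : ℝ) ≥ 2 * mu G 2 * (X.ncard : ℝ) := by
  set x : ℝ := (X.ncard : ℝ) with hxdef
  set y : ℝ := (Y.ncard : ℝ) with hydef
  set s : ℝ := (S.ncard : ℝ) with hsdef
  have hxpos : 0 < x := by
    rw [hxdef]
    exact_mod_cast (Set.ncard_pos (Set.toFinite X)).2 hX
  have hypos : 0 < y := by
    rw [hydef]
    exact_mod_cast (Set.ncard_pos (Set.toFinite Y)).2 hY
  have hxy : x ≤ y := by rw [hxdef, hydef]; exact_mod_cast hle
  have hsnn : 0 ≤ s := by rw [hsdef]; positivity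
  -- partition facts
  have hXY : ∀ v ∈ X, v ∉ Y := fun v hv => Set.disjoint_left.1 hdisj hv
  have hXS : ∀ v ∈ X, v ∉ S := by
    intro v hv
    have : v ∈ X ∪ Y := Or.inl hv
    rw [hUnion] at this
    exact this.2
  have hYS : ∀ v ∈ Y, v ∉ S := by
    intro v hv
    have : v ∈ X ∪ Y := Or.inr hv
    rw [hUnion] at this
    exact this.2
  have hcover : ∀ v, v ∈ X ∨ v ∈ Y ∨ v ∈ S := by
    intro v
    by_cases hv : v ∈ S
    · exact Or.inr (Or.inr hv)
    · have : v ∈ X ∪ Y := by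
        rw [hUnion]
        exact ⟨Set.mem_univ v, hv⟩
      rcases this with h | h
      · exact Or.inl h
      · exact Or.inr (Or.inl h)
  -- trivial case: mu G 2 ≤ 0
  by_cases hm2 : mu G 2 ≤ 0
  · have hmuN : 0 ≤ mu G n := mu_nonneg G n
    have h1 : 0 ≤ (mu G n - mu G 2) * s := mul_nonneg (by linarith) hsnn
    have h2 : 2 * mu G 2 * x ≤ 0 :=
      mul_nonpos_of_nonpos_of_nonneg (by linarith) hxpos.le
    linarith
  push_neg at hm2
  have hcard : Fintype.card (Fin n) = n := Fintype.card_fin n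
  have hmuNn : mu G (Fintype.card (Fin n)) = mu G n := by rw [hcard]
  -- S is nonempty
  have hspos : 0 < s := by
    rcases eq_or_lt_of_le hsnn with h0 | h0
    · exfalso
      have hSempty : S = ∅ := by
        have : S.ncard = 0 := by
          have := h0.symm
          rw [hsdef] at this
          exact_mod_cast this
        exact (Set.ncard_eq_zero (Set.toFinite S)).1 this
      -- test vector shows mu G 2 ≤ 0
      have hsum0 : ∑ v, (y * chi X v + (-x) * chi Y v + 0 * chi S v) = 0 := by
        rw [sum_fv, ← hxdef, ← hydef, ← hsdef]; ring
      have hq := mu2_le_quad G hm2 (fun v => y * chi X v + (-x) * chi Y v + 0 * chi S v) hsum0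
      rw [quad_fv G X Y S hXY hXS hYS hcover hNoEdge y (-x) 0,
        sum_fv_sq X Y S hXY hXS hYS hcover y (-x) 0, ← hxdef, ← hydef, ← hsdef] at hq
      rw [hSempty, eCount_empty, eCount_empty] at hq
      have hpos : 0 < y^2*x + (-x)^2*y + 0^2*s := by positivity
      nlinarith [mul_pos hm2 hpos]
    · exact h0
  -- main case : set up core inequality
  have hE1 := eCount_nonneg G X S
  have hE2 := eCount_nonneg G Y S
  have hcore := core_ineq x y s (eCount G X S) (eCount G Y S) (mu G 2) (mu G n)
    hxpos hxy hspos hE1 hE2 ?_ ?_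
  · rw [ge_iff_le]
    linarith
  · -- h2
    intro u v
    have hsum0 : ∑ w, (u*s * chi X w + v*s * chi Y w + (-(u*x+v*y)) * chi S w) = 0 := by
      rw [sum_fv, ← hxdef, ← hydef, ← hsdef]; ring
    have hq := mu2_le_quad G hm2
      (fun w => u*s * chi X w + v*s * chi Y w + (-(u*x+v*y)) * chi S w) hsum0
    rw [quad_fv G X Y S hXY hXS hYS hcover hNoEdge (u*s) (v*s) (-(u*x+v*y)),
      sum_fv_sq X Y S hXY hXS hYS hcover (u*s) (v*s) (-(u*x+v*y)),
      ← hxdef, ← hydef, ← hsdef] at hq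
    calc mu G 2 * (s^2*x*u^2 + s^2*y*v^2 + s*(u*x+v*y)^2)
        = mu G 2 * ((u*s)^2*x + (v*s)^2*y + (-(u*x+v*y))^2*s) := by ring
      _ ≤ (u*s-(-(u*x+v*y)))^2 * eCount G X S + (v*s-(-(u*x+v*y)))^2 * eCount G Y S := hq
      _ = eCount G X S*(u*(s+x)+v*y)^2 + eCount G Y S*(u*x+v*(s+y))^2 := by ring
  · -- hn
    intro u v
    have hq := quad_le_muN G
      (fun w => u*s * chi X w + v*s * chi Y w + (-(u*x+v*y)) * chi S w)
    rw [quad_fv G X Y S hXY hXS hYS hcover hNoEdge (u*s) (v*s) (-(u*x+v*y)),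
      sum_fv_sq X Y S hXY hXS hYS hcover (u*s) (v*s) (-(u*x+v*y)),
      ← hxdef, ← hydef, ← hsdef, hmuNn] at hq
    calc eCount G X S*(u*(s+x)+v*y)^2 + eCount G Y S*(u*x+v*(s+y))^2
        = (u*s-(-(u*x+v*y)))^2 * eCount G X S + (v*s-(-(u*x+v*y)))^2 * eCount G Y S := by ring
      _ ≤ mu G n * ((u*s)^2*x + (v*s)^2*y + (-(u*x+v*y))^2*s) := hq
      _ = mu G n * (s^2*x*u^2 + s^2*y*v^2 + s*(u*x+v*y)^2) := by ring
end

section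
/- Let G be a simple graph on n vertices with at least one edge, let S be a proper subset of V(G), and let X and Y be disjoint nonempty vertex subsets with X ∪ Y = V(G) − S, |X| ≤ |Y|, and no edge of G joining a vertex of X to a vertex of Y. If 2·μₙ(G)·|X| = (μₙ(G) − μ₂(G))·n, then |X| = |Y|. -/
namespace LemEqOneAux

open Matrix

/-! ### Generic spectral lemmas for real symmetric matrices -/

section Spectral
variable {N : Type*} [Fintype N] [DecidableEq N]

lemma star_coe_eq (A : Matrix N N ℝ) (hA : A.IsHermitian) :
    star (hA.eigenvectorUnitary : Matrix N N ℝ) = (hA.eigenvectorUnitary : Matrix N N ℝ)ᵀ := by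
  rw [star_eq_conjTranspose, conjTranspose_eq_transpose_of_trivial]

lemma norm_w (A : Matrix N N ℝ) (hA : A.IsHermitian) (x y : N → ℝ) :
    ((hA.eigenvectorUnitary : Matrix N N ℝ)ᵀ *ᵥ x) ⬝ᵥ ((hA.eigenvectorUnitary : Matrix N N ℝ)ᵀ *ᵥ y)
      = x ⬝ᵥ y := by
  set U : Matrix N N ℝ := (hA.eigenvectorUnitary : Matrix N N ℝ) with hU
  have h1 : U * star U = 1 := (Matrix.mem_unitaryGroup_iff).mp hA.eigenvectorUnitary.2
  rw [mulVec_transpose, ← dotProduct_mulVec, mulVec_mulVec]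
  rw [star_eq_conjTranspose, conjTranspose_eq_transpose_of_trivial] at h1
  rw [h1, one_mulVec]

lemma quadform_w (A : Matrix N N ℝ) (hA : A.IsHermitian) (x : N → ℝ) :
    x ⬝ᵥ A *ᵥ x = ∑ i, hA.eigenvalues i * (((hA.eigenvectorUnitary : Matrix N N ℝ)ᵀ *ᵥ x) i)^2 := by
  set U : Matrix N N ℝ := (hA.eigenvectorUnitary : Matrix N N ℝ) with hU
  have hs := hA.spectral_theorem
  rw [Unitary.conjStarAlgAut_apply] at hs
  rw [star_coe_eq] at hs
  have : x ⬝ᵥ A *ᵥ x = (Uᵀ *ᵥ x) ⬝ᵥ ((diagonal (RCLike.ofReal ∘ hA.eigenvalues)) *ᵥ (Uᵀ *ᵥ x)) := by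
    conv_lhs => rw [hs]
    rw [← mulVec_mulVec, ← mulVec_mulVec, dotProduct_mulVec x U, ← mulVec_transpose]
  rw [this, dotProduct, Finset.sum_congr rfl]
  intro i _
  rw [mulVec_diagonal]
  simp only [Function.comp_apply, RCLike.ofReal_real_eq_id, id_eq]
  ring

lemma rayleigh_le (A : Matrix N N ℝ) (hA : A.IsHermitian) (c : ℝ)
    (hc : ∀ i, hA.eigenvalues i ≤ c) (x : N → ℝ) :
    x ⬝ᵥ A *ᵥ x ≤ c * (x ⬝ᵥ x) := by
  rw [quadform_w A hA x, ← norm_w A hA x x, dotProduct, Finset.mul_sum]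
  apply Finset.sum_le_sum
  intro i _
  have h2 : (0:ℝ) ≤ (((hA.eigenvectorUnitary : Matrix N N ℝ)ᵀ *ᵥ x) i)^2 := sq_nonneg _
  calc hA.eigenvalues i * _ ≤ c * (((hA.eigenvectorUnitary : Matrix N N ℝ)ᵀ *ᵥ x) i)^2 :=
        mul_le_mul_of_nonneg_right (hc i) h2
    _ = _ := by ring

lemma rayleigh_ge (A : Matrix N N ℝ) (hA : A.IsHermitian)
    (one : N → ℝ) (hone : one ≠ 0) (h1 : A *ᵥ one = 0)
    (i₀ : N) (hi₀ : hA.eigenvalues i₀ = 0) (c : ℝ) (hc0 : 0 < c)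
    (hc : ∀ i, i ≠ i₀ → c ≤ hA.eigenvalues i)
    (x : N → ℝ) (hx : x ⬝ᵥ one = 0) :
    c * (x ⬝ᵥ x) ≤ x ⬝ᵥ A *ᵥ x := by
  set U : Matrix N N ℝ := (hA.eigenvectorUnitary : Matrix N N ℝ) with hU
  set w : N → ℝ := Uᵀ *ᵥ x with hw
  set y : N → ℝ := Uᵀ *ᵥ one with hy
  have hAy : ∀ i, hA.eigenvalues i * y i = 0 := by
    intro i
    have hs := hA.spectral_theorem
    rw [Unitary.conjStarAlgAut_apply] at hs
    rw [star_coe_eq] at hs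
    rw [← hU] at hs
    have h2 : Uᵀ *ᵥ (A *ᵥ one) = (diagonal (RCLike.ofReal ∘ hA.eigenvalues)) *ᵥ y := by
      conv_lhs => rw [hs]
      rw [mulVec_mulVec, mulVec_mulVec, ← mul_assoc, ← mul_assoc Uᵀ U]
      have h1' : Uᵀ * U = 1 := by
        have := (Matrix.mem_unitaryGroup_iff').mp hA.eigenvectorUnitary.2
        rwa [star_eq_conjTranspose, conjTranspose_eq_transpose_of_trivial, ← hU] at this
      rw [h1', one_mul, ← mulVec_mulVec]
    rw [h1] at h2
    have h3 := congrFun h2.symm i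
    rw [mulVec_diagonal] at h3
    simpa [RCLike.ofReal_real_eq_id] using h3
  have hyj : ∀ j, j ≠ i₀ → y j = 0 := by
    intro j hj
    have hej : hA.eigenvalues j ≠ 0 := ne_of_gt (lt_of_lt_of_le hc0 (hc j hj))
    rcases mul_eq_zero.mp (hAy j) with h | h
    · exact absurd h hej
    · exact h
  have hyi₀ : y i₀ ≠ 0 := by
    intro h0
    have hy0 : y = 0 := by
      funext j
      by_cases hj : j = i₀
      · rw [hj]; exact h0
      · exact hyj j hj
    have honeU : one = U *ᵥ y := by
      rw [hy, mulVec_mulVec]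
      have h1' : U * Uᵀ = 1 := by
        have := (Matrix.mem_unitaryGroup_iff).mp hA.eigenvectorUnitary.2
        rwa [star_eq_conjTranspose, conjTranspose_eq_transpose_of_trivial, ← hU] at this
      rw [h1', one_mulVec]
    rw [hy0, mulVec_zero] at honeU
    exact hone honeU
  have hwy : w ⬝ᵥ y = 0 := by rw [hw, hy]; rw [norm_w]; exact hx
  have hwi₀ : w i₀ = 0 := by
    have hsum : w ⬝ᵥ y = w i₀ * y i₀ := by
      rw [dotProduct]
      apply Finset.sum_eq_single
      · intro j _ hj
        rw [hyj j hj, mul_zero]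
      · intro h; exact absurd (Finset.mem_univ i₀) h
    rw [hsum] at hwy
    rcases mul_eq_zero.mp hwy with h | h
    · exact h
    · exact absurd h hyi₀
  have hxx : x ⬝ᵥ x = ∑ i, (w i)^2 := by
    rw [← norm_w A hA x x, ← hU, ← hw, dotProduct]
    apply Finset.sum_congr rfl
    intro i _
    ring
  rw [quadform_w A hA x, ← hU, ← hw, hxx, Finset.mul_sum]
  apply Finset.sum_le_sum
  intro j _
  by_cases hj : j = i₀
  · rw [hj, hwi₀, hi₀]
    simp
  · exact mul_le_mul_of_nonneg_right (hc j hj) (sq_nonneg _)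

end Spectral

/-! ### Bridge lemmas from `mu` to eigenvalues -/

section Bridge
variable {V : Type*} [Fintype V] [DecidableEq V] (G : SimpleGraph V) [DecidableRel G.Adj]

lemma lapEig_eq :
    Paper.lapEig G =
      (fun f : Fin (Fintype.card V) → ℝ => f ∘ Tuple.sort f)
        ((SimpleGraph.posSemidef_lapMatrix ℝ G).isHermitian.eigenvalues ∘
          ⇑(Fintype.equivFin V).symm) := by
  unfold Paper.lapEig
  congr!

lemma ev_le_muN (hn : 1 ≤ Fintype.card V) (i : V) :
    (SimpleGraph.posSemidef_lapMatrix ℝ G).isHermitian.eigenvalues i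
      ≤ Paper.mu G (Fintype.card V) := by
  set F := (SimpleGraph.posSemidef_lapMatrix ℝ G).isHermitian.eigenvalues ∘
    ⇑(Fintype.equivFin V).symm with hF
  have hs : Paper.lapEig G = F ∘ Tuple.sort F := lapEig_eq G
  have hmono : Monotone (F ∘ Tuple.sort F) := Tuple.monotone_sort F
  have hlt : Fintype.card V - 1 < Fintype.card V := by omega
  rw [Paper.mu, dif_pos hlt, hs]
  have : (SimpleGraph.posSemidef_lapMatrix ℝ G).isHermitian.eigenvalues i
      = (F ∘ Tuple.sort F) ((Tuple.sort F)⁻¹ (Fintype.equivFin V i)) := by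
    simp [hF]
  rw [this]
  apply hmono
  have := ((Tuple.sort F)⁻¹ (Fintype.equivFin V i)).isLt
  rw [Fin.le_def]
  simpa using by omega

lemma mu2_nonneg (hn : 2 ≤ Fintype.card V) : 0 ≤ Paper.mu G 2 := by
  set F := (SimpleGraph.posSemidef_lapMatrix ℝ G).isHermitian.eigenvalues ∘
    ⇑(Fintype.equivFin V).symm with hF
  have hs : Paper.lapEig G = F ∘ Tuple.sort F := lapEig_eq G
  have hlt : 2 - 1 < Fintype.card V := by omega
  rw [Paper.mu, dif_pos hlt, hs]
  exact (SimpleGraph.posSemidef_lapMatrix ℝ G).eigenvalues_nonneg _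

lemma mu2_facts (hn : 2 ≤ Fintype.card V) (hpos : 0 < Paper.mu G 2) :
    ∃ i₀ : V, (SimpleGraph.posSemidef_lapMatrix ℝ G).isHermitian.eigenvalues i₀ = 0 ∧
      ∀ i : V, i ≠ i₀ →
        Paper.mu G 2 ≤ (SimpleGraph.posSemidef_lapMatrix ℝ G).isHermitian.eigenvalues i := by
  set hA := (SimpleGraph.posSemidef_lapMatrix ℝ G).isHermitian with hhA
  set F := hA.eigenvalues ∘ ⇑(Fintype.equivFin V).symm with hF
  have hs : Paper.lapEig G = F ∘ Tuple.sort F := lapEig_eq G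
  have hmono : Monotone (F ∘ Tuple.sort F) := Tuple.monotone_sort F
  have hlt1 : (1 : ℕ) < Fintype.card V := by omega
  have hmu2 : Paper.mu G 2 = (F ∘ Tuple.sort F) ⟨1, hlt1⟩ := by
    rw [Paper.mu, dif_pos hlt1, hs]
  have hnonneg : ∀ i, 0 ≤ hA.eigenvalues i :=
    fun i => (SimpleGraph.posSemidef_lapMatrix ℝ G).eigenvalues_nonneg i
  have hne : (fun _ : V => (1:ℝ)) ≠ 0 := by
    intro h
    have : Nonempty V := Fintype.card_pos_iff.mp (by omega)
    obtain ⟨v⟩ := this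
    exact one_ne_zero (congrFun h v)
  have h0 : (G.lapMatrix ℝ) *ᵥ (fun _ => (1:ℝ)) = 0 := G.lapMatrix_mulVec_const_eq_zero
  have hdet : (G.lapMatrix ℝ).det = 0 :=
    (Matrix.exists_mulVec_eq_zero_iff).mp ⟨_, hne, h0⟩
  have hprod : ∏ i, hA.eigenvalues i = 0 := by
    have := hA.det_eq_prod_eigenvalues
    rw [hdet] at this
    exact_mod_cast this.symm
  obtain ⟨j, -, hj⟩ := Finset.prod_eq_zero_iff.mp hprod
  have hev : ∀ i : V, hA.eigenvalues i
      = (F ∘ Tuple.sort F) ((Tuple.sort F)⁻¹ (Fintype.equivFin V i)) := by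
    intro i; simp [hF]
  have hinj : ∀ i i' : V, (Tuple.sort F)⁻¹ (Fintype.equivFin V i)
      = (Tuple.sort F)⁻¹ (Fintype.equivFin V i') → i = i' := by
    intro i i' h
    have := (Tuple.sort F)⁻¹.injective h
    exact (Fintype.equivFin V).injective this
  refine ⟨j, hj, ?_⟩
  intro i hi
  set k := (Tuple.sort F)⁻¹ (Fintype.equivFin V i) with hk
  by_cases hk0 : (k : ℕ) = 0
  · exfalso
    set kj := (Tuple.sort F)⁻¹ (Fintype.equivFin V j) with hkj
    have hkj0 : (kj : ℕ) ≠ 0 := by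
      intro h
      apply hi
      apply hinj
      rw [← hk, ← hkj]
      apply Fin.ext
      omega
    have h1le : (⟨1, hlt1⟩ : Fin (Fintype.card V)) ≤ kj := by
      rw [Fin.le_def]; simp; omega
    have := hmono h1le
    rw [← hmu2] at this
    rw [← hev j, hj] at this
    linarith
  · have h1le : (⟨1, hlt1⟩ : Fin (Fintype.card V)) ≤ k := by
      rw [Fin.le_def]; simp; omega
    have := hmono h1le
    rw [← hmu2, ← hev i] at this
    exact this

lemma muN_rayleigh (hn : 1 ≤ Fintype.card V) (x : V → ℝ) :
    x ⬝ᵥ (G.lapMatrix ℝ) *ᵥ x ≤ Paper.mu G (Fintype.card V) * (x ⬝ᵥ x) :=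
  rayleigh_le _ (SimpleGraph.posSemidef_lapMatrix ℝ G).isHermitian _
    (ev_le_muN G hn) x

lemma mu2_rayleigh (hn : 2 ≤ Fintype.card V) (hpos : 0 < Paper.mu G 2)
    (x : V → ℝ) (hx : ∑ i, x i = 0) :
    Paper.mu G 2 * (x ⬝ᵥ x) ≤ x ⬝ᵥ (G.lapMatrix ℝ) *ᵥ x := by
  obtain ⟨i₀, hi₀, hc⟩ := mu2_facts G hn hpos
  have hne : (fun _ : V => (1:ℝ)) ≠ 0 := by
    intro h
    have : Nonempty V := Fintype.card_pos_iff.mp (by omega)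
    obtain ⟨v⟩ := this
    exact one_ne_zero (congrFun h v)
  have h0 : (G.lapMatrix ℝ) *ᵥ (fun _ => (1:ℝ)) = 0 := G.lapMatrix_mulVec_const_eq_zero
  apply rayleigh_ge _ (SimpleGraph.posSemidef_lapMatrix ℝ G).isHermitian _ hne h0 i₀ hi₀ _
    hpos hc
  rw [dotProduct]
  simpa using hx

end Bridge

/-! ### Pure real algebra -/

lemma Dpos (a b s n u v : ℝ) (ha : 0 < a) (hb : 0 < b) (hs : 0 < s)
    (hn : n = a + b + s) (hu : u ≠ 0) :
    0 < a*(n-a)*u^2 - 2*a*b*u*v + b*(n-b)*v^2 := by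
  have hu2 : 0 < u^2 := by positivity
  have hna : 0 < n - a := by rw [hn]; linarith
  have hnb : 0 < n - b := by rw [hn]; linarith
  have hid : (b*(n-b)) * (a*(n-a)*u^2 - 2*a*b*u*v + b*(n-b)*v^2)
      = (b*(n-b)*v - a*b*u)^2 + a*b*((n-a)*(n-b) - a*b)*u^2 := by ring
  have hsn : (n-a)*(n-b) - a*b = s*n := by rw [hn]; ring
  have hpos : 0 < a*b*((n-a)*(n-b) - a*b)*u^2 := by
    rw [hsn]
    have hn0 : 0 < n := by rw [hn]; linarith
    positivity
  have hlhs : 0 < (b*(n-b)) * (a*(n-a)*u^2 - 2*a*b*u*v + b*(n-b)*v^2) := by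
    rw [hid]; nlinarith [sq_nonneg (b*(n-b)*v - a*b*u)]
  have hbnb : 0 < b*(n-b) := mul_pos hb hnb
  by_contra hcon
  push_neg at hcon
  nlinarith

lemma algebra_key (a b s n α β sq : ℝ)
    (ha : 0 < a) (hab : a < b) (hs : 0 < s) (hn : n = a + b + s)
    (hα : 0 < α) (hβ : 0 < β)
    (hsq : sq^2 = (α*b*(n-b)+β*a*(n-a))^2 - 4*a*b*s*n*α*β) (hsqn : 0 ≤ sq) :
    0 < (α*b*(n-b)+β*a*(n-a)) - sq ∧
    n*((α*b*(n-b)+β*a*(n-a)) - sq) < (n-2*a)*((α*b*(n-b)+β*a*(n-a))+sq) := by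
  set Tc := α*b*(n-b)+β*a*(n-a) with hTc
  have hb0 : 0 < b := lt_trans ha hab
  have hnb : 0 < n - b := by rw [hn]; linarith
  have hna : 0 < n - a := by rw [hn]; linarith
  have h2a : 0 < n - 2*a := by rw [hn]; linarith
  have hn0 : 0 < n := by rw [hn]; linarith
  have hTcpos : 0 < Tc := add_pos (mul_pos (mul_pos hα hb0) hnb) (mul_pos (mul_pos hβ ha) hna)
  have hprod : 0 < 4*a*b*s*n*α*β := by positivity
  have hsqlt : sq < Tc := by
    apply lt_of_pow_lt_pow_left₀ 2 hTcpos.le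
    rw [hsq]; linarith
  have hsqpos : 0 < sq := by
    rcases eq_or_lt_of_le hsqn with h0 | h0
    · exfalso
      have hid : sq^2 = (α*b*(n-b) - β*a*(n-a))^2 + 4*a^2*b^2*α*β := by
        rw [hsq, hTc, hn]; ring
      have hp : 0 < (α*b*(n-b) - β*a*(n-a))^2 + 4*a^2*b^2*α*β := by positivity
      rw [← hid, ← h0] at hp
      norm_num at hp
    · exact h0
  have hTc2 : 4*α*β*a*b*(n-a)*(n-b) ≤ Tc^2 := by nlinarith [sq_nonneg (α*b*(n-b) - β*a*(n-a))]
  have hkey : 0 < (n-2*a)*(n-b) - s*(n-a) := by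
    have h : (n-2*a)*(n-b) - s*(n-a) = a*(b-a) := by rw [hn]; ring
    rw [h]; exact mul_pos ha (by linarith)
  have step1 : (n-2*a)*n*(4*α*β*a*b*(n-a)*(n-b)) ≤ (n-2*a)*n*Tc^2 :=
    mul_le_mul_of_nonneg_left hTc2 (by positivity)
  have step2 : 4*a*b*s*n*α*β*(n-a)^2 < (n-2*a)*n*(4*α*β*a*b*(n-a)*(n-b)) := by
    have h2 : (n-2*a)*n*(4*α*β*a*b*(n-a)*(n-b)) - 4*a*b*s*n*α*β*(n-a)^2
        = 4*α*β*a*b*n*(n-a)*((n-2*a)*(n-b) - s*(n-a)) := by ring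
    have hp : 0 < 4*α*β*a*b*n*(n-a)*((n-2*a)*(n-b) - s*(n-a)) := by
      apply mul_pos _ hkey; positivity
    linarith
  have hmain : a^2*Tc^2 < (n-a)^2*sq^2 := by
    have expand : (n-a)^2*(Tc^2 - 4*a*b*s*n*α*β) - a^2*Tc^2
        = (n-2*a)*n*Tc^2 - 4*a*b*s*n*α*β*(n-a)^2 := by ring
    rw [hsq]
    linarith
  have hfin : a*Tc < (n-a)*sq := by
    apply lt_of_pow_lt_pow_left₀ 2 (mul_pos hna hsqpos).le
    calc (a*Tc)^2 = a^2*Tc^2 := by ring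
      _ < (n-a)^2*sq^2 := hmain
      _ = ((n-a)*sq)^2 := by ring
  exact ⟨by linarith, by nlinarith⟩

end LemEqOneAux

set_option maxHeartbeats 1600000 in
open Paper LemEqOneAux Matrix in
/-- Equality in `2·μₙ·|X| ≤ (μₙ − μ₂)·n` forces `|X| = |Y|`. -/
theorem lemma_eq_one {n : ℕ} (G : SimpleGraph (Fin n)) (hE : G.edgeSet.Nonempty)
    (S X Y : Set (Fin n)) (hS : S ⊂ Set.univ) (hdisj : Disjoint X Y)
    (hX : X.Nonempty) (hY : Y.Nonempty) (hUnion : X ∪ Y = Set.univ \ S)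
    (hle : X.ncard ≤ Y.ncard) (hNoEdge : ∀ x ∈ X, ∀ y ∈ Y, ¬ G.Adj x y)
    (heq : 2 * mu G n * (X.ncard : ℝ) = (mu G n - mu G 2) * (n : ℝ)) :
    X.ncard = Y.ncard := by
  classical
  letI : DecidableRel G.Adj := Classical.decRel _
  by_contra hab'
  have hab : X.ncard < Y.ncard := lt_of_le_of_ne hle hab'
  set L := G.lapMatrix ℝ with hL
  -- disjointness with S
  have hXS : Disjoint X S := by
    rw [Set.disjoint_left]
    intro w hw hwS
    have : w ∈ X ∪ Y := Or.inl hw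
    rw [hUnion] at this
    exact this.2 hwS
  have hYS : Disjoint Y S := by
    rw [Set.disjoint_left]
    intro w hw hwS
    have : w ∈ X ∪ Y := Or.inr hw
    rw [hUnion] at this
    exact this.2 hwS
  -- cardinalities
  have habs : X.ncard + Y.ncard + S.ncard = n := by
    have hcover : X ∪ Y ∪ S = Set.univ := by
      rw [hUnion, Set.diff_union_self, Set.union_eq_self_of_subset_right (Set.subset_univ S)]
    have h1 : (X ∪ Y ∪ S).ncard = (X ∪ Y).ncard + S.ncard := by
      exact Set.ncard_union_eq (Set.disjoint_union_left.mpr ⟨hXS, hYS⟩) (Set.toFinite _)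
        (Set.toFinite _)
    have h2 : (X ∪ Y).ncard = X.ncard + Y.ncard :=
      Set.ncard_union_eq hdisj (Set.toFinite _) (Set.toFinite _)
    rw [hcover] at h1
    rw [Set.ncard_univ, Nat.card_eq_fintype_card, Fintype.card_fin] at h1
    omega
  have ha1 : 0 < X.ncard := (Set.ncard_pos (Set.toFinite _)).mpr hX
  have hb1 : 0 < Y.ncard := (Set.ncard_pos (Set.toFinite _)).mpr hY
  have hn2 : 2 ≤ n := by omega
  have hcard2 : 2 ≤ Fintype.card (Fin n) := by rw [Fintype.card_fin]; exact hn2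
  -- real abbreviations
  set ra : ℝ := (X.ncard : ℝ) with hra
  set rb : ℝ := (Y.ncard : ℝ) with hrb
  set rs : ℝ := (S.ncard : ℝ) with hrs
  have hrn : (n : ℝ) = ra + rb + rs := by
    rw [hra, hrb, hrs]
    exact_mod_cast habs.symm
  have hra0 : 0 < ra := by rw [hra]; exact_mod_cast ha1
  have hrb0 : 0 < rb := by rw [hrb]; exact_mod_cast hb1
  have hrab : ra < rb := by rw [hra, hrb]; exact_mod_cast hab
  have hrs0 : 0 ≤ rs := by positivity
  have hn2a : 2 * ra < (n:ℝ) := by rw [hrn]; linarith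
  have hn0 : (0:ℝ) < n := by rw [hrn]; linarith
  -- quadratic form formula
  have hqf : ∀ x : Fin n → ℝ, x ⬝ᵥ L *ᵥ x
      = (∑ i, ∑ j, if G.Adj i j then (x i - x j)^2 else 0) / 2 := by
    intro x
    rw [hL, ← Matrix.toLinearMap₂'_apply', SimpleGraph.lapMatrix_toLinearMap₂']
  -- mu G n = mu at card, bounds
  have hmuN_ray : ∀ x : Fin n → ℝ, x ⬝ᵥ L *ᵥ x ≤ mu G n * (x ⬝ᵥ x) := by
    intro x
    have := muN_rayleigh G (by omega : 1 ≤ Fintype.card (Fin n)) x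
    rwa [Fintype.card_fin] at this
  have hmu2_nonneg : 0 ≤ mu G 2 := mu2_nonneg G hcard2
  -- μₙ > 0 from the edge
  have hmuNpos : 0 < mu G n := by
    obtain ⟨e, he⟩ := hE
    induction e using Sym2.ind with
    | _ u v =>
    rw [SimpleGraph.mem_edgeSet] at he
    set x : Fin n → ℝ := fun w => if w = u then 1 else if w = v then -1 else 0 with hx
    have hne : u ≠ v := G.ne_of_adj he
    have hxu : x u = 1 := by simp [hx]
    have hxv : x v = -1 := by simp [hx, hne.symm]
    have hqx : (2:ℝ) ≤ x ⬝ᵥ L *ᵥ x := by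
      rw [hqf]
      have hterm : ∀ i j : Fin n, (0:ℝ) ≤ if G.Adj i j then (x i - x j)^2 else 0 := by
        intro i j; split <;> positivity
      have hterm4 : (if G.Adj u v then (x u - x v)^2 else 0) = (4:ℝ) := by
        rw [if_pos he, hxu, hxv]; norm_num
      have h1 : (4:ℝ) ≤ ∑ j, if G.Adj u j then (x u - x j)^2 else 0 := by
        rw [← hterm4]
        exact Finset.single_le_sum (fun j _ => hterm u j) (Finset.mem_univ v)
      have h2 : (∑ j, if G.Adj u j then (x u - x j)^2 else 0)
          ≤ ∑ i, ∑ j, if G.Adj i j then (x i - x j)^2 else 0 :=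
        Finset.single_le_sum (fun i _ => Finset.sum_nonneg (fun j _ => hterm i j)) (Finset.mem_univ u)
      linarith
    have hxx : (0:ℝ) ≤ x ⬝ᵥ x := by
      rw [dotProduct]
      apply Finset.sum_nonneg
      intro i _
      exact mul_self_nonneg _
    by_contra hcon
    push_neg at hcon
    have h6 := hmuN_ray x
    have h7 : 0 ≤ (-(mu G n)) * (x ⬝ᵥ x) := mul_nonneg (by linarith) hxx
    nlinarith [h6, h7, hqx]
  -- rearranged equality
  have heq' : mu G 2 * (n:ℝ) = mu G n * ((n:ℝ) - 2*ra) := by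
    linear_combination heq
  -- μ₂ > 0 (else contradiction)
  have hmu2pos : 0 < mu G 2 := by
    rcases eq_or_lt_of_le hmu2_nonneg with h0 | h0
    · exfalso
      rw [← h0] at heq'
      have : mu G n * ((n:ℝ) - 2*ra) > 0 := mul_pos hmuNpos (by linarith)
      linarith
    · exact h0
  -- Finset versions of X, Y, S
  set FX := X.toFinset with hFX
  set FY := Y.toFinset with hFY
  set FS := S.toFinset with hFS
  have hcX : (FX.card : ℝ) = ra := by rw [hra, Set.ncard_eq_toFinset_card']
  have hcY : (FY.card : ℝ) = rb := by rw [hrb, Set.ncard_eq_toFinset_card']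
  have hcS : (FS.card : ℝ) = rs := by rw [hrs, Set.ncard_eq_toFinset_card']
  have hdXY : Disjoint FX FY := by
    rw [Finset.disjoint_left]
    intro w hw hw'
    exact Set.disjoint_left.mp hdisj (Set.mem_toFinset.mp hw) (Set.mem_toFinset.mp hw')
  have hdXS : Disjoint FX FS := by
    rw [Finset.disjoint_left]
    intro w hw hw'
    exact Set.disjoint_left.mp hXS (Set.mem_toFinset.mp hw) (Set.mem_toFinset.mp hw')
  have hdYS : Disjoint FY FS := by
    rw [Finset.disjoint_left]
    intro w hw hw'
    exact Set.disjoint_left.mp hYS (Set.mem_toFinset.mp hw) (Set.mem_toFinset.mp hw')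
  have hsplit : ∀ g : Fin n → ℝ, ∑ w, g w
      = (∑ w ∈ FX, g w) + (∑ w ∈ FY, g w) + (∑ w ∈ FS, g w) := by
    intro g
    have hcover : FX ∪ FY ∪ FS = Finset.univ := by
      apply Finset.eq_univ_of_forall
      intro w
      simp only [Finset.mem_union, hFX, hFY, hFS, Set.mem_toFinset]
      by_cases hw : w ∈ S
      · exact Or.inr hw
      · left
        have : w ∈ X ∪ Y := by
          rw [hUnion]
          exact ⟨Set.mem_univ w, hw⟩
        exact this
    rw [← hcover, Finset.sum_union (Finset.disjoint_union_left.mpr ⟨hdXS, hdYS⟩),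
      Finset.sum_union hdXY]
  -- edge counts
  set Ec : Finset (Fin n) → Finset (Fin n) → ℝ :=
    fun P Q => ∑ i ∈ P, ∑ j ∈ Q, if G.Adj i j then (1:ℝ) else 0 with hEc
  set α := Ec FX FS with hα
  set β := Ec FY FS with hβ
  have hEnonneg : ∀ P Q, 0 ≤ Ec P Q := by
    intro P Q
    simp only [hEc]
    apply Finset.sum_nonneg
    intro i _
    apply Finset.sum_nonneg
    intro j _
    split <;> norm_num
  have hEsymm : ∀ P Q, Ec P Q = Ec Q P := by
    intro P Q
    simp only [hEc]
    rw [Finset.sum_comm]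
    apply Finset.sum_congr rfl
    intro i _
    apply Finset.sum_congr rfl
    intro j _
    rw [if_congr (G.adj_comm j i) rfl rfl]
  have hEXY : Ec FX FY = 0 := by
    simp only [hEc]
    apply Finset.sum_eq_zero
    intro i hi
    apply Finset.sum_eq_zero
    intro j hj
    rw [if_neg (hNoEdge i (Set.mem_toFinset.mp hi) j (Set.mem_toFinset.mp hj))]
  -- block computation for quadratic form
  have hblock : ∀ (P Q : Finset (Fin n)) (cP cQ : ℝ) (x : Fin n → ℝ),
      (∀ w ∈ P, x w = cP) → (∀ w ∈ Q, x w = cQ) →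
      (∑ i ∈ P, ∑ j ∈ Q, if G.Adj i j then (x i - x j)^2 else 0)
        = (cP - cQ)^2 * Ec P Q := by
    intro P Q cP cQ x hP hQ
    simp only [hEc]
    rw [Finset.mul_sum]
    apply Finset.sum_congr rfl
    intro i hi
    rw [Finset.mul_sum]
    apply Finset.sum_congr rfl
    intro j hj
    rw [hP i hi, hQ j hj]
    split <;> ring
  -- the master computation
  have master : ∀ u v : ℝ, ∃ x : Fin n → ℝ,
      (∑ i, x i) = 0 ∧
      x ⬝ᵥ x = (n:ℝ) * (ra*((n:ℝ)-ra)*u^2 - 2*ra*rb*u*v + rb*((n:ℝ)-rb)*v^2) ∧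
      x ⬝ᵥ L *ᵥ x = (n:ℝ)^2 * (α*u^2 + β*v^2) := by
    intro u v
    set cXv : ℝ := u*((n:ℝ)-ra) - v*rb with hcXv
    set cYv : ℝ := v*((n:ℝ)-rb) - u*ra with hcYv
    set cSv : ℝ := -(u*ra) - v*rb with hcSv
    set x : Fin n → ℝ := fun w => if w ∈ X then cXv else if w ∈ Y then cYv else cSv with hx
    have hxX : ∀ w ∈ FX, x w = cXv := by
      intro w hw
      rw [hx]
      simp only
      rw [if_pos (Set.mem_toFinset.mp hw)]
    have hxY : ∀ w ∈ FY, x w = cYv := by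
      intro w hw
      have hwY := Set.mem_toFinset.mp hw
      have hwX : w ∉ X := fun h => Set.disjoint_left.mp hdisj h hwY
      rw [hx]
      simp only
      rw [if_neg hwX, if_pos hwY]
    have hxS : ∀ w ∈ FS, x w = cSv := by
      intro w hw
      have hwS := Set.mem_toFinset.mp hw
      have hwX : w ∉ X := fun h => Set.disjoint_left.mp hXS h hwS
      have hwY : w ∉ Y := fun h => Set.disjoint_left.mp hYS h hwS
      rw [hx]
      simp only
      rw [if_neg hwX, if_neg hwY]
    have hconst : ∀ (F : Finset (Fin n)) (c : ℝ) (g : Fin n → ℝ), (∀ w ∈ F, g w = c) →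
        ∑ w ∈ F, g w = (F.card : ℝ) * c := by
      intro F c g hg
      rw [Finset.sum_congr rfl hg, Finset.sum_const, nsmul_eq_mul]
    refine ⟨x, ?_, ?_, ?_⟩
    · rw [hsplit, hconst FX cXv x hxX, hconst FY cYv x hxY, hconst FS cSv x hxS,
        hcX, hcY, hcS, hcXv, hcYv, hcSv, hrn]
      ring
    · rw [dotProduct, hsplit (fun w => x w * x w),
        hconst FX (cXv*cXv) _ (fun w hw => by rw [hxX w hw]),
        hconst FY (cYv*cYv) _ (fun w hw => by rw [hxY w hw]),
        hconst FS (cSv*cSv) _ (fun w hw => by rw [hxS w hw]),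
        hcX, hcY, hcS, hcXv, hcYv, hcSv, hrn]
      ring
    · rw [hqf, hsplit (fun i => ∑ j, if G.Adj i j then (x i - x j)^2 else 0)]
      have hin : ∀ P : Finset (Fin n), ∑ i ∈ P, (∑ j, if G.Adj i j then (x i - x j)^2 else 0)
          = (∑ i ∈ P, ∑ j ∈ FX, if G.Adj i j then (x i - x j)^2 else 0)
          + (∑ i ∈ P, ∑ j ∈ FY, if G.Adj i j then (x i - x j)^2 else 0)
          + (∑ i ∈ P, ∑ j ∈ FS, if G.Adj i j then (x i - x j)^2 else 0) := by
        intro P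
        rw [← Finset.sum_add_distrib, ← Finset.sum_add_distrib]
        apply Finset.sum_congr rfl
        intro i _
        rw [hsplit (fun j => if G.Adj i j then (x i - x j)^2 else 0)]
      rw [hin FX, hin FY, hin FS]
      rw [hblock FX FX cXv cXv x hxX hxX, hblock FX FY cXv cYv x hxX hxY,
        hblock FX FS cXv cSv x hxX hxS, hblock FY FX cYv cXv x hxY hxX,
        hblock FY FY cYv cYv x hxY hxY, hblock FY FS cYv cSv x hxY hxS,
        hblock FS FX cSv cXv x hxS hxX, hblock FS FY cSv cYv x hxS hxY,
        hblock FS FS cSv cSv x hxS hxS]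
      rw [hEXY, hEsymm FS FX, hEsymm FS FY]
      have hEYX : Ec FY FX = 0 := by rw [hEsymm FY FX, hEXY]
      rw [hEYX, ← hα, ← hβ]
      have hdX : cXv - cSv = u * (n:ℝ) := by rw [hcXv, hcSv]; ring
      have hdY : cYv - cSv = v * (n:ℝ) := by rw [hcYv, hcSv]; ring
      have hdX' : cSv - cXv = -(u * (n:ℝ)) := by rw [hcXv, hcSv]; ring
      have hdY' : cSv - cYv = -(v * (n:ℝ)) := by rw [hcYv, hcSv]; ring
      rw [hdX, hdY, hdX', hdY']
      ring
  -- degenerate cases: α = 0 or β = 0 impossible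
  have hαβpos : 0 < α ∧ 0 < β := by
    constructor
    · rcases eq_or_lt_of_le (hEnonneg FX FS) with h0 | h0
      · exfalso
        rw [← hα] at h0
        obtain ⟨x, hx1, hx2, hx3⟩ := master 1 0
        have hray := mu2_rayleigh G hcard2 hmu2pos x hx1
        rw [hx2, hx3, ← h0] at hray
        have hD : 0 < (n:ℝ) * (ra*((n:ℝ)-ra)*1^2 - 2*ra*rb*1*0 + rb*((n:ℝ)-rb)*0^2) := by
          have : (0:ℝ) < (n:ℝ) - ra := by rw [hrn]; linarith
          have h5 : (n:ℝ) * (ra*((n:ℝ)-ra)*1^2 - 2*ra*rb*1*0 + rb*((n:ℝ)-rb)*0^2)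
              = (n:ℝ)*(ra*((n:ℝ)-ra)) := by ring
          rw [h5]
          positivity
        have hzero : ((n:ℝ))^2 * ((0:ℝ)*1^2 + β*0^2) = 0 := by ring
        rw [hzero] at hray
        exact absurd hray (not_le.mpr (mul_pos hmu2pos hD))
      · rw [hα]; exact h0
    · rcases eq_or_lt_of_le (hEnonneg FY FS) with h0 | h0
      · exfalso
        rw [← hβ] at h0
        obtain ⟨x, hx1, hx2, hx3⟩ := master 0 1
        have hray := mu2_rayleigh G hcard2 hmu2pos x hx1
        rw [hx2, hx3, ← h0] at hray
        have hD : 0 < (n:ℝ) * (ra*((n:ℝ)-ra)*0^2 - 2*ra*rb*0*1 + rb*((n:ℝ)-rb)*1^2) := by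
          have : (0:ℝ) < (n:ℝ) - rb := by rw [hrn]; linarith
          have h5 : (n:ℝ) * (ra*((n:ℝ)-ra)*0^2 - 2*ra*rb*0*1 + rb*((n:ℝ)-rb)*1^2)
              = (n:ℝ)*(rb*((n:ℝ)-rb)) := by ring
          rw [h5]
          positivity
        have hzero : ((n:ℝ))^2 * (α*0^2 + 0*1^2) = 0 := by ring
        rw [hzero] at hray
        exact absurd hray (not_le.mpr (mul_pos hmu2pos hD))
      · rw [hβ]; exact h0
  obtain ⟨hαpos, hβpos⟩ := hαβpos
  -- s > 0 : because α > 0 means there is an X-S adjacency, so S ≠ ∅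
  have hrspos : 0 < rs := by
    rcases lt_or_ge 0 rs with h | h
    · exact h
    · exfalso
      have hrs0' : rs = 0 := le_antisymm h hrs0
      have hS0 : S.ncard = 0 := by
        have : ((S.ncard : ℕ) : ℝ) = 0 := by rw [← hrs]; exact hrs0'
        exact_mod_cast this
      have hFSempty : FS = ∅ := by
        rw [hFS, Set.toFinset_eq_empty]
        rw [Set.ncard_eq_zero] at hS0
        exact hS0
      rw [hα] at hαpos
      simp only [hEc, hFSempty] at hαpos
      simp at hαpos
  -- set up λ₂, λ₃
  set Tc : ℝ := α*rb*((n:ℝ)-rb) + β*ra*((n:ℝ)-ra) with hTcdef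
  set Δ : ℝ := Tc^2 - 4*ra*rb*rs*(n:ℝ)*α*β with hΔdef
  have hΔnonneg : 0 ≤ Δ := by
    have hid : Δ = (α*rb*((n:ℝ)-rb) - β*ra*((n:ℝ)-ra))^2 + 4*ra^2*rb^2*α*β := by
      rw [hΔdef, hTcdef, hrn]; ring
    rw [hid]
    positivity
  set sq : ℝ := Real.sqrt Δ with hsqdef
  have hsq2 : sq^2 = Δ := Real.sq_sqrt hΔnonneg
  have hsqn : 0 ≤ sq := Real.sqrt_nonneg Δ
  have halg := algebra_key ra rb rs (n:ℝ) α β sq hra0 hrab hrspos hrn hαpos hβpos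
    (by rw [hsq2, hΔdef, hTcdef]) hsqn
  rw [← hTcdef] at halg
  obtain ⟨hl2pos, hstrict⟩ := halg
  set lam2 : ℝ := (Tc - sq) / (2*(ra*rb*rs)) with hlam2
  set lam3 : ℝ := (Tc + sq) / (2*(ra*rb*rs)) with hlam3
  have habspos : 0 < ra*rb*rs := by positivity
  have hlam2pos : 0 < lam2 := by
    rw [hlam2]
    apply div_pos hl2pos
    linarith
  have hTcpos : 0 < Tc := by
    have : 0 ≤ sq := hsqn
    linarith
  have hlam3pos : 0 < lam3 := by
    rw [hlam3]
    apply div_pos (by linarith)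
    linarith
  -- characteristic equations
  have hsqTc : sq^2 = Tc^2 - 4*ra*rb*rs*(n:ℝ)*α*β := by rw [hsq2, hΔdef]
  have hchar : ∀ lam : ℝ, (lam = lam2 ∨ lam = lam3) →
      ra*rb*rs*lam^2 - Tc*lam + (n:ℝ)*α*β = 0 := by
    intro lam hl
    have h4 : (ra*rb*rs) ≠ 0 := by positivity
    rcases hl with h | h <;> rw [h]
    · have expand : ra*rb*rs*lam2^2 - Tc*lam2 + (n:ℝ)*α*β
          = (sq^2 - (Tc^2 - 4*ra*rb*rs*(n:ℝ)*α*β)) / (4*(ra*rb*rs)) := by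
        rw [hlam2]
        field_simp
        ring
      rw [expand, hsqTc, sub_self, zero_div]
    · have expand : ra*rb*rs*lam3^2 - Tc*lam3 + (n:ℝ)*α*β
          = (sq^2 - (Tc^2 - 4*ra*rb*rs*(n:ℝ)*α*β)) / (4*(ra*rb*rs)) := by
        rw [hlam3]
        field_simp
        ring
      rw [expand, hsqTc, sub_self, zero_div]
  -- eigen-test vectors: for lam root, (u,v) = (lam*ra*rb, lam*ra*(n-ra) - n*α)
  have htest : ∀ lam : ℝ, ra*rb*rs*lam^2 - Tc*lam + (n:ℝ)*α*β = 0 → 0 < lam →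
      ∃ x : Fin n → ℝ, (∑ i, x i) = 0 ∧
        0 < x ⬝ᵥ x ∧
        x ⬝ᵥ L *ᵥ x = lam * (x ⬝ᵥ x) := by
    intro lam hroot hlampos
    set u : ℝ := lam*ra*rb with hu
    set v : ℝ := lam*ra*((n:ℝ)-ra) - (n:ℝ)*α with hv
    obtain ⟨x, hx1, hx2, hx3⟩ := master u v
    have hupos : 0 < u := by
      rw [hu]
      positivity
    have hDpos : 0 < x ⬝ᵥ x := by
      rw [hx2]
      apply mul_pos hn0
      exact Dpos ra rb rs (n:ℝ) u v hra0 hrb0 hrspos hrn (ne_of_gt hupos)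
    refine ⟨x, hx1, hDpos, ?_⟩
    rw [hx2, hx3]
    -- N = lam * D as polynomial identity given the characteristic equation
    have hrs_eq : rs = (n:ℝ) - ra - rb := by rw [hrn]; ring
    rw [hu, hv]
    rw [hrs_eq] at hroot
    rw [hTcdef] at hroot
    linear_combination ((n:ℝ)^3*α - ra*(n:ℝ)^2*((n:ℝ)-ra)*lam) * hroot
  -- the two Rayleigh bounds
  obtain ⟨x2, hx21, hx22, hx23⟩ := htest lam2 (hchar lam2 (Or.inl rfl)) hlam2pos
  obtain ⟨x3, hx31, hx32, hx33⟩ := htest lam3 (hchar lam3 (Or.inr rfl)) hlam3pos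
  have hray2 := mu2_rayleigh G hcard2 hmu2pos x2 hx21
  rw [hx23] at hray2
  have hmu2le : mu G 2 ≤ lam2 := le_of_mul_le_mul_right (by linarith) hx22
  have hray3 := hmuN_ray x3
  rw [hx33] at hray3
  have hlam3le : lam3 ≤ mu G n := le_of_mul_le_mul_right (by linarith) hx32
  -- final contradiction
  have hstrict' : (n:ℝ) * lam2 < ((n:ℝ) - 2*ra) * lam3 := by
    have h2 : lam2 * (2*(ra*rb*rs)) = Tc - sq := by
      rw [hlam2]; field_simp
    have h3 : lam3 * (2*(ra*rb*rs)) = Tc + sq := by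
      rw [hlam3]; field_simp
    have hd : (0:ℝ) < 2*(ra*rb*rs) := by linarith
    have h4 : ((n:ℝ)*lam2)*(2*(ra*rb*rs)) < (((n:ℝ)-2*ra)*lam3)*(2*(ra*rb*rs)) := by
      calc ((n:ℝ)*lam2)*(2*(ra*rb*rs)) = (n:ℝ)*(lam2*(2*(ra*rb*rs))) := by ring
        _ = (n:ℝ)*(Tc - sq) := by rw [h2]
        _ < ((n:ℝ)-2*ra)*(Tc+sq) := hstrict
        _ = (((n:ℝ)-2*ra)*lam3)*(2*(ra*rb*rs)) := by rw [← h3]; ring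
    exact lt_of_mul_lt_mul_right h4 (le_of_lt hd)
  have hchain : mu G 2 * (n:ℝ) < mu G n * ((n:ℝ) - 2*ra) := by
    calc mu G 2 * (n:ℝ) ≤ lam2 * (n:ℝ) := by
          apply mul_le_mul_of_nonneg_right hmu2le (le_of_lt hn0)
      _ < ((n:ℝ) - 2*ra) * lam3 := by rw [mul_comm]; exact hstrict'
      _ ≤ ((n:ℝ) - 2*ra) * mu G n := by
          apply mul_le_mul_of_nonneg_left hlam3le (by linarith)
      _ = mu G n * ((n:ℝ) - 2*ra) := by ring
  rw [heq'] at hchain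
  exact lt_irrefl _ hchain
end

section
/- Let G be a simple graph on n vertices with at least one edge, and let X and Y be two disjoint subsets of V(G) such that no edge of G joins a vertex of X to a vertex of Y. Then |X|·|Y|·(μₙ(G) + μ₂(G))² ≤ (n − |X|)·(n − |Y|)·(μₙ(G) − μ₂(G))². -/
open scoped RealInnerProductSpace
open Matrix

noncomputable def HmrsW (m : ℕ) : (Fin m → ℝ) → EuclideanSpace ℝ (Fin m) :=
  (WithLp.equiv 2 (Fin m → ℝ)).symm

lemma HmrsW_inner {m : ℕ} (x y : Fin m → ℝ) : ⟪HmrsW m x, HmrsW m y⟫ = ∑ i, x i * y i := by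
  simp [HmrsW, PiLp.inner_apply, mul_comm]

lemma HmrsW_zero {m : ℕ} : HmrsW m (0 : Fin m → ℝ) = 0 := rfl

lemma Hmrs_inner_b {m : ℕ} {L : Matrix (Fin m) (Fin m) ℝ} (hH : L.IsHermitian)
    (i : Fin m) (w : Fin m → ℝ) :
    ⟪(hH.eigenvectorBasis i : EuclideanSpace ℝ (Fin m)), HmrsW m (L *ᵥ w)⟫
      = hH.eigenvalues i * ⟪(hH.eigenvectorBasis i : EuclideanSpace ℝ (Fin m)), HmrsW m w⟫ := by
  have hsymm : Lᵀ = L := by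
    have h := hH.eq
    rwa [Matrix.conjTranspose_eq_transpose_of_trivial] at h
  have h1 : ⟪(hH.eigenvectorBasis i : EuclideanSpace ℝ (Fin m)), HmrsW m (L *ᵥ w)⟫
      = (⇑(hH.eigenvectorBasis i) : Fin m → ℝ) ⬝ᵥ (L *ᵥ w) := by
    simp [HmrsW, PiLp.inner_apply, dotProduct, mul_comm]
  rw [h1, Matrix.dotProduct_mulVec, ← Matrix.mulVec_transpose, hsymm,
    hH.mulVec_eigenvectorBasis]
  simp [HmrsW, PiLp.inner_apply, dotProduct, Finset.mul_sum,
    mul_assoc, mul_comm, mul_left_comm]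

lemma Hmrs_core {m : ℕ} (hm : 0 < m) (L : Matrix (Fin m) (Fin m) ℝ) (hH : L.IsHermitian)
    (h1 : L *ᵥ (fun _ => (1:ℝ)) = 0) (μ2 μm : ℝ)
    (hub : ∀ i, hH.eigenvalues i ≤ μm)
    (hlb : ∀ i, hH.eigenvalues i < μ2 → ∀ j, j ≠ i → μ2 ≤ hH.eigenvalues j)
    (h0 : ∀ i, 0 ≤ hH.eigenvalues i)
    (u v : Fin m → ℝ) (hu : ∑ i, u i = 0)
    (huLv : u ⬝ᵥ (L *ᵥ v) = 0) :
    (μm + μ2)^2 * (∑ i, u i * v i)^2 ≤ (μm - μ2)^2 * ((∑ i, u i^2) * (∑ i, v i^2)) := by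
  set c := (μm + μ2)/2 with hc
  set r := (μm - μ2)/2 with hr
  set b := hH.eigenvectorBasis with hb
  set ev := hH.eigenvalues with hev
  set yu : Fin m → ℝ := fun j => (L *ᵥ u) j - c * u j with hyu
  have hWsub : HmrsW m yu = HmrsW m (L *ᵥ u) - c • HmrsW m u := rfl
  have hcoord : ∀ i, ⟪b i, HmrsW m yu⟫ = (ev i - c) * ⟪b i, HmrsW m u⟫ := by
    intro i
    rw [hWsub, inner_sub_right, inner_smul_right, Hmrs_inner_b]
    ring
  have hone : ∀ i, ev i ≠ 0 → ⟪b i, HmrsW m (fun _ => (1:ℝ))⟫ = 0 := by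
    intro i hi
    have h2 := Hmrs_inner_b hH i (fun _ => (1:ℝ))
    rw [h1, HmrsW_zero, inner_zero_right] at h2
    exact (mul_eq_zero.1 h2.symm).resolve_left hi
  have hbad : ∀ i, ev i < μ2 → ⟪b i, HmrsW m u⟫ = 0 := by
    intro i hi
    have hpos : 0 < μ2 := lt_of_le_of_lt (h0 i) hi
    have hj : ∀ j, j ≠ i → ⟪b j, HmrsW m (fun _ => (1:ℝ))⟫ = 0 := fun j hji =>
      hone j (ne_of_gt (lt_of_lt_of_le hpos (hlb i hi j hji)))
    have hP := b.sum_inner_mul_inner (HmrsW m (fun _ => (1:ℝ))) (HmrsW m u)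
    have hsum : ∑ j, ⟪HmrsW m (fun _ => (1:ℝ)), b j⟫ * ⟪b j, HmrsW m u⟫
        = ⟪HmrsW m (fun _ => (1:ℝ)), b i⟫ * ⟪b i, HmrsW m u⟫ := by
      apply Finset.sum_eq_single
      · intro j _ hji
        rw [real_inner_comm, hj j hji, zero_mul]
      · intro h; exact absurd (Finset.mem_univ i) h
    have hinner1u : ⟪HmrsW m (fun _ => (1:ℝ)), HmrsW m u⟫ = 0 := by
      rw [HmrsW_inner]; simpa using hu
    rw [hsum, hinner1u] at hP
    have hP1 := b.sum_inner_mul_inner (HmrsW m (fun _ => (1:ℝ))) (HmrsW m (fun _ => (1:ℝ)))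
    have hsum1 : ∑ j, ⟪HmrsW m (fun _ => (1:ℝ)), b j⟫ * ⟪b j, HmrsW m (fun _ => (1:ℝ))⟫
        = ⟪HmrsW m (fun _ => (1:ℝ)), b i⟫ * ⟪b i, HmrsW m (fun _ => (1:ℝ))⟫ := by
      apply Finset.sum_eq_single
      · intro j _ hji
        rw [hj j hji, mul_zero]
      · intro h; exact absurd (Finset.mem_univ i) h
    have hm1 : ⟪HmrsW m (fun _ => (1:ℝ)), HmrsW m (fun _ => (1:ℝ))⟫ = (m : ℝ) := by
      rw [HmrsW_inner]; simp
    rw [hsum1, hm1] at hP1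
    have hbne : ⟪HmrsW m (fun _ => (1:ℝ)), b i⟫ ≠ 0 := by
      intro h0'
      rw [h0', zero_mul] at hP1
      have : (0:ℝ) < m := by exact_mod_cast hm
      linarith
    exact (mul_eq_zero.1 hP).resolve_left hbne
  have eyu : ∀ x : Fin m → ℝ, ⟪HmrsW m x, HmrsW m x⟫ = ∑ i, ⟪b i, HmrsW m x⟫^2 := by
    intro x
    rw [← b.sum_inner_mul_inner (HmrsW m x) (HmrsW m x)]
    refine Finset.sum_congr rfl fun i _ => ?_
    rw [real_inner_comm (HmrsW m x) (b i), sq]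
  have hA : ⟪HmrsW m yu, HmrsW m yu⟫ ≤ r^2 * ⟪HmrsW m u, HmrsW m u⟫ := by
    rw [eyu, eyu, Finset.mul_sum]
    apply Finset.sum_le_sum
    intro i _
    rcases lt_or_ge (ev i) μ2 with hi | hi
    · rw [hcoord, hbad i hi, mul_zero]
      norm_num
    · rw [hcoord, hc, hr]
      have h2 := hub i
      nlinarith [sq_nonneg (⟪b i, HmrsW m u⟫),
        mul_nonneg (mul_nonneg (sub_nonneg.2 h2) (sub_nonneg.2 hi)) (sq_nonneg (⟪b i, HmrsW m u⟫))]
  have hCS := real_inner_mul_inner_self_le (HmrsW m yu) (HmrsW m v)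
  have hyuv : ⟪HmrsW m yu, HmrsW m v⟫ = -(c * (∑ i, u i * v i)) := by
    rw [HmrsW_inner]
    have e1 : ∑ i, yu i * v i = (∑ i, (L *ᵥ u) i * v i) - c * ∑ i, u i * v i := by
      simp only [hyu, sub_mul, Finset.sum_sub_distrib, Finset.mul_sum, mul_assoc]
    have e2 : (∑ i, (L *ᵥ u) i * v i) = u ⬝ᵥ (L *ᵥ v) := by
      have h3 : (∑ i, (L *ᵥ u) i * v i) = (L *ᵥ u) ⬝ᵥ v := rfl
      have hsymm : Lᵀ = L := by
        have h4 := hH.eq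
        rwa [Matrix.conjTranspose_eq_transpose_of_trivial] at h4
      rw [h3, dotProduct_comm, Matrix.dotProduct_mulVec, ← Matrix.mulVec_transpose,
        hsymm, dotProduct_comm]
    rw [e1, e2, huLv]
    ring
  have huu : ⟪HmrsW m u, HmrsW m u⟫ = ∑ i, u i^2 := by rw [HmrsW_inner]; simp [sq]
  have hvv : ⟪HmrsW m v, HmrsW m v⟫ = ∑ i, v i^2 := by rw [HmrsW_inner]; simp [sq]
  have hv2 : (0:ℝ) ≤ ∑ i, v i^2 := by positivity
  rw [hyuv] at hCS
  rw [huu] at hA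
  rw [hvv] at hCS
  have key : (c * (∑ i, u i * v i))^2 ≤ r^2 * ((∑ i, u i^2) * (∑ i, v i^2)) := by
    nlinarith [hCS, mul_le_mul_of_nonneg_right hA hv2]
  calc (μm + μ2)^2 * (∑ i, u i * v i)^2 = 4 * (c * (∑ i, u i * v i))^2 := by rw [hc]; ring
    _ ≤ 4 * (r^2 * ((∑ i, u i^2) * (∑ i, v i^2))) := by linarith
    _ = (μm - μ2)^2 * ((∑ i, u i^2) * (∑ i, v i^2)) := by rw [hr]; ring

lemma Hmrs_ind_sum {n : ℕ} (X : Set (Fin n)) [DecidablePred (· ∈ X)] :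
    ∑ a : Fin n, (if a ∈ X then (1:ℝ) else 0) = (X.ncard : ℝ) := by
  rw [Finset.sum_boole]
  congr 1
  rw [Set.ncard_eq_toFinset_card']
  simp [Set.toFinset]

open Paper in
/-- Haemers separation inequality. -/
theorem haemers_separation {n : ℕ} (G : SimpleGraph (Fin n)) (hE : G.edgeSet.Nonempty)
    (X Y : Set (Fin n)) (hdisj : Disjoint X Y)
    (hNoEdge : ∀ x ∈ X, ∀ y ∈ Y, ¬ G.Adj x y) :
    (X.ncard : ℝ) * (Y.ncard : ℝ) * (mu G n + mu G 2) ^ 2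
      ≤ ((n : ℝ) - X.ncard) * ((n : ℝ) - Y.ncard) * (mu G n - mu G 2) ^ 2 := by
  classical
  letI instE := Classical.decEq (Fin n)
  letI instR : DecidableRel G.Adj := Classical.decRel _
  -- n ≥ 2
  have hn2 : 2 ≤ n := by
    obtain ⟨e, he⟩ := hE
    induction e using Sym2.ind with
    | _ a b =>
      rw [SimpleGraph.mem_edgeSet] at he
      have hne : a ≠ b := G.ne_of_adj he
      have h1 := a.isLt
      have h2 := b.isLt
      have h3 : (a : ℕ) ≠ (b : ℕ) := fun h => hne (Fin.ext h)
      omega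
  set ev := (SimpleGraph.posSemidef_lapMatrix ℝ G).isHermitian.eigenvalues with hevdef
  set eqv := Fintype.equivFin (Fin n) with heqv
  set f0 : Fin (Fintype.card (Fin n)) → ℝ := ev ∘ eqv.symm with hf0
  have hdef : lapEig G = f0 ∘ Tuple.sort f0 := rfl
  have hmono : Monotone (lapEig G) := hdef ▸ Tuple.monotone_sort f0
  have hN : Fintype.card (Fin n) = n := Fintype.card_fin n
  have h1N : 1 < Fintype.card (Fin n) := by omega
  have hn1N : n - 1 < Fintype.card (Fin n) := by omega
  have hmu2 : mu G 2 = lapEig G ⟨1, h1N⟩ := dif_pos h1N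
  have hmun : mu G n = lapEig G ⟨n - 1, hn1N⟩ := dif_pos hn1N
  set μ2 := mu G 2 with hμ2
  set μm := mu G n with hμm
  set κ : Fin n → Fin (Fintype.card (Fin n)) := fun i => (Tuple.sort f0)⁻¹ (eqv i) with hκdef
  have hκ : ∀ i, ev i = lapEig G (κ i) := by
    intro i
    rw [hdef]
    simp [hκdef, hf0]
  have hκinj : Function.Injective κ := fun i j h =>
    eqv.injective ((Tuple.sort f0)⁻¹.injective h)
  have hub : ∀ i, ev i ≤ μm := by
    intro i
    rw [hκ i, hmun]
    apply hmono
    rw [Fin.le_def]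
    show ((κ i) : ℕ) ≤ n - 1
    have h := (κ i).isLt
    omega
  have h0ev : ∀ i, 0 ≤ ev i := fun i =>
    (SimpleGraph.posSemidef_lapMatrix ℝ G).eigenvalues_nonneg i
  have hlb : ∀ i, ev i < μ2 → ∀ j, j ≠ i → μ2 ≤ ev j := by
    intro i hi j hji
    have hki : ((κ i : ℕ)) = 0 := by
      by_contra h
      have h1le : (⟨1, h1N⟩ : Fin (Fintype.card (Fin n))) ≤ κ i := by
        rw [Fin.le_def]; show 1 ≤ ((κ i) : ℕ); omega
      have h2 := hmono h1le
      rw [← hmu2, ← hκ i] at h2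
      linarith
    have hvne : ((κ j : ℕ)) ≠ ((κ i : ℕ)) := by
      intro h
      exact hji (hκinj (Fin.ext h))
    have h1le : (⟨1, h1N⟩ : Fin (Fintype.card (Fin n))) ≤ κ j := by
      rw [Fin.le_def]; show 1 ≤ ((κ j) : ℕ); omega
    have h2 := hmono h1le
    rw [← hmu2, ← hκ j] at h2
    exact h2
  have hμ2m : μ2 ≤ μm := by
    rw [hmu2, hmun]
    apply hmono
    rw [Fin.le_def]
    show (1:ℕ) ≤ n - 1
    omega
  have h0μ2 : 0 ≤ μ2 := by
    rw [hmu2, hdef]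
    exact h0ev _
  -- the vectors
  set x := (X.ncard : ℝ) with hx
  set y := (Y.ncard : ℝ) with hy
  have hnR : (0:ℝ) < n := by
    have : (0:ℕ) < n := by omega
    exact_mod_cast this
  have hnne : (n:ℝ) ≠ 0 := ne_of_gt hnR
  set u : Fin n → ℝ := fun a => (if a ∈ X then (1:ℝ) else 0) - x / n with hud
  set v : Fin n → ℝ := fun a => (if a ∈ Y then (1:ℝ) else 0) - y / n with hvd
  have hXsum : ∑ a : Fin n, (if a ∈ X then (1:ℝ) else 0) = x := Hmrs_ind_sum X
  have hYsum : ∑ a : Fin n, (if a ∈ Y then (1:ℝ) else 0) = y := Hmrs_ind_sum Y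
  have hXY0 : ∑ a : Fin n, (if a ∈ X then (1:ℝ) else 0) * (if a ∈ Y then (1:ℝ) else 0) = 0 := by
    apply Finset.sum_eq_zero
    intro a _
    by_cases ha : a ∈ X
    · have : a ∉ Y := fun hb => Set.disjoint_left.mp hdisj ha hb
      simp [this]
    · simp [ha]
  have hcard : ((Finset.univ : Finset (Fin n)).card : ℝ) = n := by simp
  have hu0 : ∑ a, u a = 0 := by
    simp only [hud, Finset.sum_sub_distrib, hXsum, Finset.sum_const, Finset.card_univ,
      Fintype.card_fin, nsmul_eq_mul]
    field_simp
    ring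
  have hS : ∑ a, u a * v a = -(x * y / n) := by
    have h5 : ∀ a, u a * v a = (if a ∈ X then (1:ℝ) else 0) * (if a ∈ Y then (1:ℝ) else 0)
        - (y/n) * (if a ∈ X then (1:ℝ) else 0) - (x/n) * (if a ∈ Y then (1:ℝ) else 0)
        + (x/n) * (y/n) := by
      intro a
      simp only [hud, hvd]
      ring
    rw [Finset.sum_congr rfl fun a _ => h5 a]
    simp only [Finset.sum_add_distrib, Finset.sum_sub_distrib, ← Finset.mul_sum, hXY0, hXsum,
      hYsum, Finset.sum_const, Finset.card_univ, Fintype.card_fin, nsmul_eq_mul]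
    field_simp
    ring
  have hsqX : ∀ a, (if a ∈ X then (1:ℝ) else 0) * (if a ∈ X then (1:ℝ) else 0)
      = (if a ∈ X then (1:ℝ) else 0) := by
    intro a; by_cases ha : a ∈ X <;> simp [ha]
  have hU : ∑ a, u a ^ 2 = x - x^2/n := by
    have h5 : ∀ a, u a ^ 2 = (if a ∈ X then (1:ℝ) else 0) * (if a ∈ X then (1:ℝ) else 0)
        - (2*x/n) * (if a ∈ X then (1:ℝ) else 0) + (x/n)^2 := by
      intro a
      simp only [hud]
      ring
    rw [Finset.sum_congr rfl fun a _ => h5 a]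
    simp only [Finset.sum_add_distrib, Finset.sum_sub_distrib, ← Finset.mul_sum,
      Finset.sum_congr rfl fun a _ => hsqX a, hXsum, Finset.sum_const, Finset.card_univ,
      Fintype.card_fin, nsmul_eq_mul]
    field_simp
    ring
  have hsqY : ∀ a, (if a ∈ Y then (1:ℝ) else 0) * (if a ∈ Y then (1:ℝ) else 0)
      = (if a ∈ Y then (1:ℝ) else 0) := by
    intro a; by_cases ha : a ∈ Y <;> simp [ha]
  have hV : ∑ a, v a ^ 2 = y - y^2/n := by
    have h5 : ∀ a, v a ^ 2 = (if a ∈ Y then (1:ℝ) else 0) * (if a ∈ Y then (1:ℝ) else 0)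
        - (2*y/n) * (if a ∈ Y then (1:ℝ) else 0) + (y/n)^2 := by
      intro a
      simp only [hvd]
      ring
    rw [Finset.sum_congr rfl fun a _ => h5 a]
    simp only [Finset.sum_add_distrib, Finset.sum_sub_distrib, ← Finset.mul_sum,
      Finset.sum_congr rfl fun a _ => hsqY a, hYsum, Finset.sum_const, Finset.card_univ,
      Fintype.card_fin, nsmul_eq_mul]
    field_simp
    ring
  -- the Laplacian
  set L := G.lapMatrix ℝ with hLdef
  have h1 : L *ᵥ (fun _ => (1:ℝ)) = 0 := G.lapMatrix_mulVec_const_eq_zero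
  have hsymm : Lᵀ = L := G.isSymm_lapMatrix ℝ
  have hLab : ∀ a ∈ X, ∀ b ∈ Y, L a b = 0 := by
    intro a ha b hb
    have hab : a ≠ b := fun h => Set.disjoint_left.mp hdisj ha (h ▸ hb)
    have hadj : ¬ G.Adj a b := hNoEdge a ha b hb
    simp [hLdef, SimpleGraph.lapMatrix, SimpleGraph.degMatrix, SimpleGraph.adjMatrix,
      Matrix.diagonal, hab, hadj]
  have huLv : u ⬝ᵥ (L *ᵥ v) = 0 := by
    have hvdec : v = (fun a => if a ∈ Y then (1:ℝ) else 0) - (y/n) • (fun _ => (1:ℝ)) := by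
      funext a
      simp [hvd]
    have hudec : u = (fun a => if a ∈ X then (1:ℝ) else 0) - (x/n) • (fun _ => (1:ℝ)) := by
      funext a
      simp [hud]
    rw [hvdec, Matrix.mulVec_sub, Matrix.mulVec_smul, h1, smul_zero, sub_zero,
      hudec, sub_dotProduct, smul_dotProduct]
    have hterm2 : (fun _ => (1:ℝ)) ⬝ᵥ (L *ᵥ (fun a => if a ∈ Y then (1:ℝ) else 0)) = 0 := by
      rw [Matrix.dotProduct_mulVec, ← Matrix.mulVec_transpose, hsymm, h1,
        zero_dotProduct]
    have hterm1 : (fun a => if a ∈ X then (1:ℝ) else 0) ⬝ᵥ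
        (L *ᵥ (fun a => if a ∈ Y then (1:ℝ) else 0)) = 0 := by
      show (∑ a, (if a ∈ X then (1:ℝ) else 0) * (∑ b, L a b * (if b ∈ Y then (1:ℝ) else 0))) = 0
      apply Finset.sum_eq_zero
      intro a _
      by_cases ha : a ∈ X
      · have hinner : (∑ b, L a b * (if b ∈ Y then (1:ℝ) else 0)) = 0 := by
          apply Finset.sum_eq_zero
          intro b _
          by_cases hb : b ∈ Y
          · simp [hb, hLab a ha b hb]
          · simp [hb]
        rw [hinner, mul_zero]
      · simp [ha]
    rw [hterm1, hterm2, smul_zero, sub_zero]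
  -- apply the core inequality
  have hcore := Hmrs_core (m := n) (by omega) L
    (SimpleGraph.posSemidef_lapMatrix ℝ G).isHermitian h1 μ2 μm hub hlb h0ev u v hu0 huLv
  rw [hS, hU, hV] at hcore
  -- final algebra
  have hxn : x ≤ n := by
    have h6 := Set.ncard_le_ncard (Set.subset_univ X) Set.finite_univ
    rw [Set.ncard_univ, Nat.card_eq_fintype_card, Fintype.card_fin] at h6
    rw [hx]; exact_mod_cast h6
  have hyn : y ≤ n := by
    have h6 := Set.ncard_le_ncard (Set.subset_univ Y) Set.finite_univ
    rw [Set.ncard_univ, Nat.card_eq_fintype_card, Fintype.card_fin] at h6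
    rw [hy]; exact_mod_cast h6
  have hx0 : (0:ℝ) ≤ x := by positivity
  have hy0 : (0:ℝ) ≤ y := by positivity
  by_cases hxy : x * y = 0
  · have hL0 : x * y * (μm + μ2)^2 = 0 := by rw [hxy, zero_mul]
    rw [hL0]
    apply mul_nonneg (mul_nonneg (by linarith) (by linarith)) (sq_nonneg _)
  · have hpos : 0 < x * y := lt_of_le_of_ne (mul_nonneg hx0 hy0) (Ne.symm hxy)
    have h3 : (μm + μ2)^2 * ((x*y) * (x*y)) ≤ (μm - μ2)^2 * (((n - x)*(n - y)) * (x*y)) := by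
      have e1 : (μm + μ2)^2 * ((x*y) * (x*y)) = ((μm + μ2)^2 * (-(x*y/n))^2) * (n:ℝ)^2 := by
        rw [neg_sq, div_pow, ← mul_div_assoc,
          div_mul_cancel₀ _ (by positivity : ((n:ℝ)^2) ≠ 0)]
        ring
      have e2 : (μm - μ2)^2 * (((n - x)*(n - y)) * (x*y))
          = ((μm - μ2)^2 * ((x - x^2/n) * (y - y^2/n))) * (n:ℝ)^2 := by
        field_simp
      rw [e1, e2]
      exact mul_le_mul_of_nonneg_right hcore (by positivity)
    have h4 : (x * y * (μm + μ2)^2) * (x*y) ≤ ((n - x) * (n - y) * (μm - μ2)^2) * (x*y) := by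
      linarith [h3]
    exact le_of_mul_le_mul_right h4 hpos
end
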